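/- arXiv:0906.5089 — 2 statements merged into one kernel-verified Lean document; each statement's English description precedes it below -/
import Mathlib

section
/- On the set of all rooted (respectively unrooted) phylogenies over a fixed taxon set of size at least 3 (respectively 4): (i) for p = 0, the parametric triplet (quartet) distance d^(p) is not a distance measure (there exist distinct trees T1 ≠ T2 with d^(0)(T1,T2) = 0); and (ii) for every p ∈ (0, 1/2), d^(p) is a distance measure but not a metric (the triangle inequality fails for some triple of trees). -/
open Finset

attribute [local instance] Classical.propDecidable

/-- A rooted phylogenetic tree over the taxon set `Fin n`, encoded by its hierarchy of
clusters: for each node of the tree, the set of leaves descending from that node.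
The conditions say that the whole leaf set and all singletons are clusters, the empty
set is not a cluster, and that the family is laminar.  Such families correspond exactly
to rooted phylogenies in which every internal node has at least two children. -/
structure RTree (n : ℕ) where
  clusters : Finset (Finset (Fin n))
  univ_mem : Finset.univ ∈ clusters
  singleton_mem : ∀ x : Fin n, {x} ∈ clusters
  empty_not_mem : ∅ ∉ clusters
  laminar : ∀ C ∈ clusters, ∀ D ∈ clusters, C ⊆ D ∨ D ⊆ C ∨ C ∩ D = ∅

/-- All triplets (3-element subsets) of `Fin n`. -/
def triplets (n : ℕ) : Finset (Finset (Fin n)) :=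
  Finset.powersetCard 3 Finset.univ

/-- The cluster family of the restriction `T|X`, for a rooted tree with cluster
family `F`: the nonempty intersections of clusters with `X`. -/
noncomputable def famRestrict {n : ℕ} (F : Finset (Finset (Fin n))) (X : Finset (Fin n)) :
    Finset (Finset (Fin n)) :=
  (F.image (· ∩ X)).filter (· ≠ ∅)

/-- A triplet `X` is resolved in a rooted tree with cluster family `F` iff the
restriction `T|X` is fully resolved, equivalently iff some cluster contains exactly
two of the three elements of `X`. -/
def famResolved {n : ℕ} (F : Finset (Finset (Fin n))) (X : Finset (Fin n)) : Prop :=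
  ∃ C ∈ F, (C ∩ X).card = 2

/-- Triplets resolved, identically, in both trees. -/
noncomputable def famSetS {n : ℕ} (F G : Finset (Finset (Fin n))) :
    Finset (Finset (Fin n)) :=
  (triplets n).filter fun X =>
    famResolved F X ∧ famResolved G X ∧ famRestrict F X = famRestrict G X

/-- Triplets resolved, differently, in both trees. -/
noncomputable def famSetD {n : ℕ} (F G : Finset (Finset (Fin n))) :
    Finset (Finset (Fin n)) :=
  (triplets n).filter fun X =>
    famResolved F X ∧ famResolved G X ∧ famRestrict F X ≠ famRestrict G X

/-- Triplets resolved in the first tree but not in the second. -/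
noncomputable def famSetR1 {n : ℕ} (F G : Finset (Finset (Fin n))) :
    Finset (Finset (Fin n)) :=
  (triplets n).filter fun X => famResolved F X ∧ ¬ famResolved G X

/-- Triplets resolved in the second tree but not in the first. -/
noncomputable def famSetR2 {n : ℕ} (F G : Finset (Finset (Fin n))) :
    Finset (Finset (Fin n)) :=
  (triplets n).filter fun X => famResolved G X ∧ ¬ famResolved F X

/-- Triplets unresolved in both trees. -/
noncomputable def famSetU {n : ℕ} (F G : Finset (Finset (Fin n))) :
    Finset (Finset (Fin n)) :=
  (triplets n).filter fun X => ¬ famResolved F X ∧ ¬ famResolved G X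

/-- The parametric triplet distance, at the level of cluster families. -/
noncomputable def famPdist {n : ℕ} (p : ℝ) (F G : Finset (Finset (Fin n))) : ℝ :=
  ((famSetD F G).card : ℝ) +
    p * (((famSetR1 F G).card : ℝ) + ((famSetR2 F G).card : ℝ))

namespace RTree

variable {n : ℕ}

/-- The cluster family of the restriction `T|X`. -/
noncomputable def restrict (T : RTree n) (X : Finset (Fin n)) : Finset (Finset (Fin n)) :=
  famRestrict T.clusters X

/-- The triplet `X` is resolved in `T`, i.e. `T|X` is fully resolved. -/
def Resolved (T : RTree n) (X : Finset (Fin n)) : Prop :=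
  famResolved T.clusters X

/-- A rooted phylogeny is fully resolved (all internal nodes have exactly two
children) iff every triplet is resolved in it. -/
def FullyResolved (T : RTree n) : Prop :=
  ∀ X ∈ triplets n, T.Resolved X

noncomputable def setS (T₁ T₂ : RTree n) : Finset (Finset (Fin n)) :=
  famSetS T₁.clusters T₂.clusters

noncomputable def setD (T₁ T₂ : RTree n) : Finset (Finset (Fin n)) :=
  famSetD T₁.clusters T₂.clusters

noncomputable def setR1 (T₁ T₂ : RTree n) : Finset (Finset (Fin n)) :=
  famSetR1 T₁.clusters T₂.clusters

noncomputable def setR2 (T₁ T₂ : RTree n) : Finset (Finset (Fin n)) :=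
  famSetR2 T₁.clusters T₂.clusters

noncomputable def setU (T₁ T₂ : RTree n) : Finset (Finset (Fin n)) :=
  famSetU T₁.clusters T₂.clusters

/-- The parametric triplet distance `d⁽ᵖ⁾(T₁,T₂)`. -/
noncomputable def pdist (p : ℝ) (T₁ T₂ : RTree n) : ℝ :=
  famPdist p T₁.clusters T₂.clusters

theorem clusters_injective : Function.Injective (clusters (n := n)) := by
  rintro ⟨s₁, _, _, _, _⟩ ⟨s₂, _, _, _, _⟩ h
  simp only [mk.injEq] at h ⊢
  exact h

noncomputable instance : Fintype (RTree n) :=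
  Fintype.ofInjective clusters clusters_injective

end RTree

/-- An unrooted phylogenetic tree over the taxon set `Fin n`, encoded by its split
system: the collection of all sets of leaves lying on one side of some edge of the
tree.  By the splits-equivalence (Buneman) theorem, the families satisfying these
conditions (all trivial splits present, closure under complementation, pairwise
compatibility) correspond exactly to unrooted phylogenies in which every internal
node has degree at least three. -/
structure UTree (n : ℕ) where
  splits : Finset (Finset (Fin n))
  empty_not_mem : ∅ ∉ splits
  trivial_mem : ∀ x : Fin n, ({x} : Finset (Fin n)) = Finset.univ ∨ {x} ∈ splits
  compl_mem : ∀ A ∈ splits, Finset.univ \ A ∈ splits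
  compat : ∀ A ∈ splits, ∀ B ∈ splits, A ⊆ B ∨ B ⊆ A ∨ A ∩ B = ∅ ∨ A ∪ B = Finset.univ

/-- All quartets (4-element subsets) of `Fin n`. -/
def quartets (n : ℕ) : Finset (Finset (Fin n)) :=
  Finset.powersetCard 4 Finset.univ

/-- The split system of the restriction `T|X`, for an unrooted tree with split
system `F`: the proper nonempty intersections of split sides with `X`. -/
noncomputable def famRestrictU {n : ℕ} (F : Finset (Finset (Fin n))) (X : Finset (Fin n)) :
    Finset (Finset (Fin n)) :=
  (F.image (· ∩ X)).filter fun A => A ≠ ∅ ∧ A ≠ X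

/-- A quartet `X` is resolved in an unrooted tree with split system `F` iff the
restriction `T|X` is fully resolved, equivalently iff some split side contains
exactly two of the four elements of `X`. -/
def famResolvedU {n : ℕ} (F : Finset (Finset (Fin n))) (X : Finset (Fin n)) : Prop :=
  ∃ A ∈ F, (A ∩ X).card = 2

/-- Quartets resolved, identically, in both trees. -/
noncomputable def famSetSU {n : ℕ} (F G : Finset (Finset (Fin n))) :
    Finset (Finset (Fin n)) :=
  (quartets n).filter fun X =>
    famResolvedU F X ∧ famResolvedU G X ∧ famRestrictU F X = famRestrictU G X

/-- Quartets resolved, differently, in both trees. -/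
noncomputable def famSetDU {n : ℕ} (F G : Finset (Finset (Fin n))) :
    Finset (Finset (Fin n)) :=
  (quartets n).filter fun X =>
    famResolvedU F X ∧ famResolvedU G X ∧ famRestrictU F X ≠ famRestrictU G X

/-- Quartets resolved in the first tree but not in the second. -/
noncomputable def famSetR1U {n : ℕ} (F G : Finset (Finset (Fin n))) :
    Finset (Finset (Fin n)) :=
  (quartets n).filter fun X => famResolvedU F X ∧ ¬ famResolvedU G X

/-- Quartets resolved in the second tree but not in the first. -/
noncomputable def famSetR2U {n : ℕ} (F G : Finset (Finset (Fin n))) :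
    Finset (Finset (Fin n)) :=
  (quartets n).filter fun X => famResolvedU G X ∧ ¬ famResolvedU F X

/-- Quartets unresolved in both trees. -/
noncomputable def famSetUU {n : ℕ} (F G : Finset (Finset (Fin n))) :
    Finset (Finset (Fin n)) :=
  (quartets n).filter fun X => ¬ famResolvedU F X ∧ ¬ famResolvedU G X

/-- The parametric quartet distance, at the level of split systems. -/
noncomputable def famPdistU {n : ℕ} (p : ℝ) (F G : Finset (Finset (Fin n))) : ℝ :=
  ((famSetDU F G).card : ℝ) +
    p * (((famSetR1U F G).card : ℝ) + ((famSetR2U F G).card : ℝ))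

namespace UTree

variable {n : ℕ}

/-- The split system of the restriction `T|X`. -/
noncomputable def restrict (T : UTree n) (X : Finset (Fin n)) : Finset (Finset (Fin n)) :=
  famRestrictU T.splits X

/-- The quartet `X` is resolved in `T`, i.e. `T|X` is fully resolved. -/
def Resolved (T : UTree n) (X : Finset (Fin n)) : Prop :=
  famResolvedU T.splits X

/-- An unrooted phylogeny is fully resolved (all internal nodes have degree exactly
three) iff every quartet is resolved in it. -/
def FullyResolved (T : UTree n) : Prop :=
  ∀ X ∈ quartets n, T.Resolved X

noncomputable def setS (T₁ T₂ : UTree n) : Finset (Finset (Fin n)) :=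
  famSetSU T₁.splits T₂.splits

noncomputable def setD (T₁ T₂ : UTree n) : Finset (Finset (Fin n)) :=
  famSetDU T₁.splits T₂.splits

noncomputable def setR1 (T₁ T₂ : UTree n) : Finset (Finset (Fin n)) :=
  famSetR1U T₁.splits T₂.splits

noncomputable def setR2 (T₁ T₂ : UTree n) : Finset (Finset (Fin n)) :=
  famSetR2U T₁.splits T₂.splits

noncomputable def setU (T₁ T₂ : UTree n) : Finset (Finset (Fin n)) :=
  famSetUU T₁.splits T₂.splits

/-- The parametric quartet distance `d⁽ᵖ⁾(T₁,T₂)`. -/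
noncomputable def pdist (p : ℝ) (T₁ T₂ : UTree n) : ℝ :=
  famPdistU p T₁.splits T₂.splits

theorem splits_injective : Function.Injective (splits (n := n)) := by
  rintro ⟨s₁, _, _, _, _⟩ ⟨s₂, _, _, _, _⟩ h
  simp only [mk.injEq] at h ⊢
  exact h

noncomputable instance : Fintype (UTree n) :=
  Fintype.ofInjective splits splits_injective

end UTree


section AuxGeneral

variable {n : ℕ}

lemma inter_triple_eq {α : Type*} [DecidableEq α] {C : Finset α} {x y z : α}
    (hx : x ∈ C) (hy : y ∈ C) (hz : z ∉ C) :
    C ∩ ({x, y, z} : Finset α) = {x, y} := by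
  ext t
  simp only [Finset.mem_inter, Finset.mem_insert, Finset.mem_singleton]
  constructor
  · rintro ⟨ht, rfl | rfl | rfl⟩
    · exact Or.inl rfl
    · exact Or.inr rfl
    · exact absurd ht hz
  · rintro (rfl | rfl)
    · exact ⟨hx, Or.inl rfl⟩
    · exact ⟨hy, Or.inr (Or.inl rfl)⟩

lemma inter_quad_eq {α : Type*} [DecidableEq α] {C : Finset α} {x y z w : α}
    (hx : x ∈ C) (hy : y ∈ C) (hz : z ∉ C) (hw : w ∉ C) :
    C ∩ ({x, y, z, w} : Finset α) = {x, y} := by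
  ext t
  simp only [Finset.mem_inter, Finset.mem_insert, Finset.mem_singleton]
  constructor
  · rintro ⟨ht, rfl | rfl | rfl | rfl⟩
    · exact Or.inl rfl
    · exact Or.inr rfl
    · exact absurd ht hz
    · exact absurd ht hw
  · rintro (rfl | rfl)
    · exact ⟨hx, Or.inl rfl⟩
    · exact ⟨hy, Or.inr (Or.inl rfl)⟩

lemma card_triple {α : Type*} [DecidableEq α] {x y z : α}
    (hxy : x ≠ y) (hxz : x ≠ z) (hyz : y ≠ z) :
    ({x, y, z} : Finset α).card = 3 := by
  rw [Finset.card_insert_of_notMem (by simp [hxy, hxz]), Finset.card_pair hyz]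

lemma card_quad {α : Type*} [DecidableEq α] {x y z w : α}
    (hxy : x ≠ y) (hxz : x ≠ z) (hxw : x ≠ w) (hyz : y ≠ z) (hyw : y ≠ w) (hzw : z ≠ w) :
    ({x, y, z, w} : Finset α).card = 4 := by
  rw [Finset.card_insert_of_notMem (by simp [hxy, hxz, hxw]),
    Finset.card_insert_of_notMem (by simp [hyz, hyw]), Finset.card_pair hzw]

end AuxGeneral

section RUnique

variable {n : ℕ}

lemma rtree_cluster_char (T : RTree n) (C : Finset (Fin n))
    (hC2 : 2 ≤ C.card) (hCu : C ≠ Finset.univ)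
    (h : ∀ x ∈ C, ∀ y ∈ C, x ≠ y → ∀ z ∉ C,
      ∃ E ∈ T.clusters, E ∩ ({x, y, z} : Finset (Fin n)) = {x, y}) :
    C ∈ T.clusters := by
  classical
  -- minimal cluster containing C
  set S : Finset (Finset (Fin n)) := T.clusters.filter (fun D => C ⊆ D) with hS
  have hSne : S.Nonempty := ⟨Finset.univ, by simp [hS, T.univ_mem]⟩
  obtain ⟨D, hDS, hDmin⟩ := S.exists_min_image Finset.card hSne
  rw [hS, Finset.mem_filter] at hDS
  obtain ⟨hDcl, hCD⟩ := hDS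
  by_cases hDC : D ⊆ C
  · rwa [Finset.Subset.antisymm hCD hDC]
  -- pick z ∈ D \ C
  obtain ⟨z, hzD, hzC⟩ := Finset.not_subset.1 hDC
  -- pick x ≠ y in C
  obtain ⟨x, hxC, y, hyC, hxy⟩ := Finset.one_lt_card.1 hC2
  -- the family of clusters containing y avoiding z
  set W : Finset (Finset (Fin n)) := T.clusters.filter (fun E => y ∈ E ∧ z ∉ E) with hW
  have hmem : ∀ t ∈ C, t ≠ y → ∃ E ∈ W, t ∈ E := by
    intro t htC hty
    obtain ⟨E, hEcl, hE⟩ := h t htC y hyC hty z hzC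
    have htE : t ∈ E := by
      have : t ∈ E ∩ ({t, y, z} : Finset (Fin n)) := by rw [hE]; simp
      exact (Finset.mem_inter.1 this).1
    have hyE : y ∈ E := by
      have : y ∈ E ∩ ({t, y, z} : Finset (Fin n)) := by rw [hE]; simp
      exact (Finset.mem_inter.1 this).1
    have hzE : z ∉ E := by
      intro hz
      have : z ∈ ({t, y} : Finset (Fin n)) := by
        rw [← hE]; exact Finset.mem_inter.2 ⟨hz, by simp⟩
      simp only [Finset.mem_insert, Finset.mem_singleton] at this
      rcases this with rfl | rfl
      · exact hzC htC
      · exact hzC hyC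
    exact ⟨E, by simp [hW, hEcl, hyE, hzE], htE⟩
  have hWne : W.Nonempty := by
    obtain ⟨E, hEW, _⟩ := hmem x hxC hxy
    exact ⟨E, hEW⟩
  obtain ⟨E', hE'W, hE'max⟩ := W.exists_max_image Finset.card hWne
  rw [hW, Finset.mem_filter] at hE'W
  obtain ⟨hE'cl, hyE', hzE'⟩ := hE'W
  have hCE' : C ⊆ E' := by
    intro t htC
    by_cases hty : t = y
    · subst hty; exact hyE'
    obtain ⟨E, hEW, htE⟩ := hmem t htC hty
    have hcard := hE'max E hEW
    rw [hW, Finset.mem_filter] at hEW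
    obtain ⟨hEcl, hyE, hzE⟩ := hEW
    rcases T.laminar E hEcl E' hE'cl with hsub | hsub | hdisj
    · exact hsub htE
    · have heq := Finset.eq_of_subset_of_card_le hsub hcard
      rw [heq]; exact htE
    · exfalso
      have : y ∈ E ∩ E' := Finset.mem_inter.2 ⟨hyE, hyE'⟩
      rw [hdisj] at this; exact absurd this (Finset.notMem_empty y)
  -- E' is strictly inside D, contradicting minimality
  have hE'D : E' ⊆ D ∧ E' ≠ D := by
    rcases T.laminar E' hE'cl D hDcl with hsub | hsub | hdisj
    · exact ⟨hsub, fun he => hzE' (he ▸ hzD)⟩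
    · exact absurd (hsub hzD) hzE'
    · exfalso
      have : y ∈ E' ∩ D := Finset.mem_inter.2 ⟨hyE', hCD hyC⟩
      rw [hdisj] at this; exact absurd this (Finset.notMem_empty y)
  have hE'S : E' ∈ S := by simp [hS, hE'cl, hCE']
  have := hDmin E' hE'S
  exact absurd (Finset.eq_of_subset_of_card_le hE'D.1 this) hE'D.2

lemma rtree_clusters_subset (hn : 3 ≤ n) (T₁ T₂ : RTree n)
    (hres : ∀ X ∈ triplets n, famResolved T₁.clusters X → famResolved T₂.clusters X)
    (hrestr : ∀ X ∈ triplets n, famResolved T₁.clusters X → famResolved T₂.clusters X →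
      famRestrict T₁.clusters X = famRestrict T₂.clusters X) :
    T₁.clusters ⊆ T₂.clusters := by
  intro C hC
  rcases Nat.lt_or_ge C.card 2 with hlt | hge
  · interval_cases h : C.card
    · rw [Finset.card_eq_zero] at h; exact absurd (h ▸ hC) T₁.empty_not_mem
    · obtain ⟨x, hx⟩ := Finset.card_eq_one.1 h
      exact hx ▸ T₂.singleton_mem x
  by_cases hCu : C = Finset.univ
  · exact hCu ▸ T₂.univ_mem
  refine rtree_cluster_char T₂ C hge hCu ?_
  intro x hx y hy hxy z hz
  have hzx : z ≠ x := fun h => hz (h ▸ hx)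
  have hzy : z ≠ y := fun h => hz (h ▸ hy)
  set X : Finset (Fin n) := {x, y, z} with hX
  have hXmem : X ∈ triplets n := by
    rw [triplets, Finset.mem_powersetCard_univ]
    exact card_triple hxy (Ne.symm hzx) (Ne.symm hzy)
  have hCX : C ∩ X = {x, y} := inter_triple_eq hx hy hz
  have hres1 : famResolved T₁.clusters X :=
    ⟨C, hC, by rw [hCX]; exact Finset.card_pair hxy⟩
  have hres2 := hres X hXmem hres1
  have heq := hrestr X hXmem hres1 hres2
  have hmem1 : ({x, y} : Finset (Fin n)) ∈ famRestrict T₁.clusters X := by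
    rw [famRestrict, Finset.mem_filter]
    refine ⟨Finset.mem_image.2 ⟨C, hC, hCX⟩, ?_⟩
    simp
  rw [heq, famRestrict, Finset.mem_filter, Finset.mem_image] at hmem1
  obtain ⟨⟨E, hEcl, hE⟩, _⟩ := hmem1
  exact ⟨E, hEcl, hE⟩

lemma rtree_eq_of_agree (hn : 3 ≤ n) (T₁ T₂ : RTree n)
    (hres : ∀ X ∈ triplets n, famResolved T₁.clusters X ↔ famResolved T₂.clusters X)
    (hrestr : ∀ X ∈ triplets n, famResolved T₁.clusters X → famResolved T₂.clusters X →
      famRestrict T₁.clusters X = famRestrict T₂.clusters X) :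
    T₁ = T₂ := by
  apply RTree.clusters_injective
  apply Finset.Subset.antisymm
  · exact rtree_clusters_subset hn T₁ T₂ (fun X hX h => (hres X hX).1 h) hrestr
  · exact rtree_clusters_subset hn T₂ T₁ (fun X hX h => (hres X hX).2 h)
      (fun X hX h1 h2 => (hrestr X hX h2 h1).symm)

end RUnique

section UUnique

variable {m : ℕ}

lemma utree_split_ne_empty (T : UTree m) {A : Finset (Fin m)} (hA : A ∈ T.splits) :
    A ≠ ∅ := fun h => T.empty_not_mem (h ▸ hA)

lemma utree_split_ne_univ (T : UTree m) {A : Finset (Fin m)} (hA : A ∈ T.splits) :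
    A ≠ Finset.univ := by
  intro h
  have := T.compl_mem A hA
  rw [h, Finset.sdiff_self] at this
  exact T.empty_not_mem this

lemma utree_split_char (hm : 2 ≤ m) (T : UTree m) (A : Finset (Fin m))
    (hA2 : 2 ≤ A.card) (hAc2 : 2 ≤ (Finset.univ \ A).card)
    (h : ∀ x ∈ A, ∀ y ∈ A, x ≠ y → ∀ z ∉ A, ∀ w ∉ A, z ≠ w →
      ∃ E ∈ T.splits, E ∩ ({x, y, z, w} : Finset (Fin m)) = {x, y}) :
    A ∈ T.splits := by
  classical
  set S : Finset (Finset (Fin m)) := T.splits.filter (fun D => A ⊆ D) with hS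
  have hSne : S.Nonempty := by
    obtain ⟨z₀, hz₀⟩ := Finset.card_pos.1 (lt_of_lt_of_le Nat.zero_lt_two hAc2)
    rw [Finset.mem_sdiff] at hz₀
    have hz₀u : ({z₀} : Finset (Fin m)) ≠ Finset.univ := by
      intro h
      have : (Finset.univ : Finset (Fin m)).card = 1 := by rw [← h]; simp
      rw [Finset.card_univ, Fintype.card_fin] at this; omega
    have hz₀s : ({z₀} : Finset (Fin m)) ∈ T.splits :=
      (T.trivial_mem z₀).resolve_left hz₀u
    refine ⟨Finset.univ \ {z₀}, ?_⟩
    rw [hS, Finset.mem_filter]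
    refine ⟨T.compl_mem _ hz₀s, ?_⟩
    intro t ht
    rw [Finset.mem_sdiff]
    exact ⟨Finset.mem_univ t, by simp; rintro rfl; exact hz₀.2 ht⟩
  obtain ⟨D, hDS, hDmin⟩ := S.exists_min_image Finset.card hSne
  rw [hS, Finset.mem_filter] at hDS
  obtain ⟨hDsp, hAD⟩ := hDS
  by_cases hDA : D ⊆ A
  · rwa [Finset.Subset.antisymm hAD hDA]
  obtain ⟨z, hzD, hzA⟩ := Finset.not_subset.1 hDA
  -- pick w outside D
  have hDU : D ≠ Finset.univ := utree_split_ne_univ T hDsp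
  obtain ⟨w, hwD⟩ : ∃ w, w ∉ D := by
    by_contra hc
    push_neg at hc
    exact hDU (Finset.eq_univ_iff_forall.2 hc)
  have hwA : w ∉ A := fun hw => hwD (hAD hw)
  have hzw : z ≠ w := fun h => hwD (h ▸ hzD)
  obtain ⟨x, hxA, y, hyA, hxy⟩ := Finset.one_lt_card.1 hA2
  set W : Finset (Finset (Fin m)) := T.splits.filter (fun E => y ∈ E ∧ z ∉ E ∧ w ∉ E) with hW
  have hmem : ∀ t ∈ A, t ≠ y → ∃ E ∈ W, t ∈ E := by
    intro t htA hty
    obtain ⟨E, hEsp, hE⟩ := h t htA y hyA hty z hzA w hwA hzw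
    have htE : t ∈ E := by
      have : t ∈ E ∩ ({t, y, z, w} : Finset (Fin m)) := by rw [hE]; simp
      exact (Finset.mem_inter.1 this).1
    have hyE : y ∈ E := by
      have : y ∈ E ∩ ({t, y, z, w} : Finset (Fin m)) := by rw [hE]; simp
      exact (Finset.mem_inter.1 this).1
    have hzE : z ∉ E := by
      intro hz
      have : z ∈ ({t, y} : Finset (Fin m)) := by
        rw [← hE]; exact Finset.mem_inter.2 ⟨hz, by simp⟩
      simp only [Finset.mem_insert, Finset.mem_singleton] at this
      rcases this with rfl | rfl
      · exact hzA htA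
      · exact hzA hyA
    have hwE : w ∉ E := by
      intro hw
      have : w ∈ ({t, y} : Finset (Fin m)) := by
        rw [← hE]; exact Finset.mem_inter.2 ⟨hw, by simp⟩
      simp only [Finset.mem_insert, Finset.mem_singleton] at this
      rcases this with rfl | rfl
      · exact hwA htA
      · exact hwA hyA
    exact ⟨E, by simp [hW, hEsp, hyE, hzE, hwE], htE⟩
  have hWne : W.Nonempty := by
    obtain ⟨E, hEW, _⟩ := hmem x hxA hxy
    exact ⟨E, hEW⟩
  obtain ⟨E', hE'W, hE'max⟩ := W.exists_max_image Finset.card hWne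
  rw [hW, Finset.mem_filter] at hE'W
  obtain ⟨hE'sp, hyE', hzE', hwE'⟩ := hE'W
  have hAE' : A ⊆ E' := by
    intro t htA
    by_cases hty : t = y
    · subst hty; exact hyE'
    obtain ⟨E, hEW, htE⟩ := hmem t htA hty
    have hcard := hE'max E hEW
    rw [hW, Finset.mem_filter] at hEW
    obtain ⟨hEsp, hyE, hzE, hwE⟩ := hEW
    rcases T.compat E hEsp E' hE'sp with hsub | hsub | hdisj | huniv
    · exact hsub htE
    · have heq := Finset.eq_of_subset_of_card_le hsub hcard
      rw [heq]; exact htE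
    · exfalso
      have : y ∈ E ∩ E' := Finset.mem_inter.2 ⟨hyE, hyE'⟩
      rw [hdisj] at this; exact absurd this (Finset.notMem_empty y)
    · exfalso
      have : z ∈ E ∪ E' := huniv ▸ Finset.mem_univ z
      rw [Finset.mem_union] at this; tauto
  have hE'D : E' ⊆ D ∧ E' ≠ D := by
    rcases T.compat E' hE'sp D hDsp with hsub | hsub | hdisj | huniv
    · exact ⟨hsub, fun he => hzE' (he ▸ hzD)⟩
    · exact absurd (hsub hzD) hzE'
    · exfalso
      have : y ∈ E' ∩ D := Finset.mem_inter.2 ⟨hyE', hAD hyA⟩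
      rw [hdisj] at this; exact absurd this (Finset.notMem_empty y)
    · exfalso
      have : w ∈ E' ∪ D := huniv ▸ Finset.mem_univ w
      rw [Finset.mem_union] at this; tauto
  have hE'S : E' ∈ S := by simp [hS, hE'sp, hAE']
  have := hDmin E' hE'S
  exact absurd (Finset.eq_of_subset_of_card_le hE'D.1 this) hE'D.2

lemma utree_splits_subset (hm : 4 ≤ m) (T₁ T₂ : UTree m)
    (hres : ∀ X ∈ quartets m, famResolvedU T₁.splits X → famResolvedU T₂.splits X)
    (hrestr : ∀ X ∈ quartets m, famResolvedU T₁.splits X → famResolvedU T₂.splits X →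
      famRestrictU T₁.splits X = famRestrictU T₂.splits X) :
    T₁.splits ⊆ T₂.splits := by
  intro A hA
  have hAe : A ≠ ∅ := utree_split_ne_empty T₁ hA
  have hAu : A ≠ Finset.univ := utree_split_ne_univ T₁ hA
  have hA1 : 1 ≤ A.card := Finset.card_pos.2 (Finset.nonempty_of_ne_empty hAe)
  have hAc1 : 1 ≤ (Finset.univ \ A).card := by
    rw [Nat.one_le_iff_ne_zero]
    intro h
    rw [Finset.card_eq_zero, Finset.sdiff_eq_empty_iff_subset] at h
    exact hAu (Finset.Subset.antisymm (Finset.subset_univ A) h)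
  rcases Nat.lt_or_ge A.card 2 with hlt | hge
  · have : A.card = 1 := by omega
    obtain ⟨x, hx⟩ := Finset.card_eq_one.1 this
    subst hx
    exact (T₂.trivial_mem x).resolve_left (by
      intro h
      have : (Finset.univ : Finset (Fin m)).card = 1 := by rw [← h]; simp
      rw [Finset.card_univ, Fintype.card_fin] at this; omega)
  rcases Nat.lt_or_ge (Finset.univ \ A).card 2 with hclt | hcge
  · have : (Finset.univ \ A).card = 1 := by omega
    obtain ⟨x, hx⟩ := Finset.card_eq_one.1 this
    have hxu : ({x} : Finset (Fin m)) ≠ Finset.univ := by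
      intro h
      have : (Finset.univ : Finset (Fin m)).card = 1 := by rw [← h]; simp
      rw [Finset.card_univ, Fintype.card_fin] at this; omega
    have : Finset.univ \ ({x} : Finset (Fin m)) ∈ T₂.splits :=
      T₂.compl_mem _ ((T₂.trivial_mem x).resolve_left hxu)
    rwa [← hx, Finset.sdiff_sdiff_self_left, Finset.univ_inter] at this
  refine utree_split_char (by omega) T₂ A hge hcge ?_
  intro x hx y hy hxy z hz w hw hzw
  have hzx : z ≠ x := fun h => hz (h ▸ hx)
  have hzy : z ≠ y := fun h => hz (h ▸ hy)
  have hwx : w ≠ x := fun h => hw (h ▸ hx)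
  have hwy : w ≠ y := fun h => hw (h ▸ hy)
  set X : Finset (Fin m) := {x, y, z, w} with hX
  have hXcard : X.card = 4 :=
    card_quad hxy (Ne.symm hzx) (Ne.symm hwx) (Ne.symm hzy) (Ne.symm hwy) hzw
  have hXmem : X ∈ quartets m := by
    rw [quartets, Finset.mem_powersetCard_univ]; exact hXcard
  have hAX : A ∩ X = {x, y} := inter_quad_eq hx hy hz hw
  have hres1 : famResolvedU T₁.splits X :=
    ⟨A, hA, by rw [hAX]; exact Finset.card_pair hxy⟩
  have hres2 := hres X hXmem hres1
  have heq := hrestr X hXmem hres1 hres2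
  have hmem1 : ({x, y} : Finset (Fin m)) ∈ famRestrictU T₁.splits X := by
    rw [famRestrictU, Finset.mem_filter]
    refine ⟨Finset.mem_image.2 ⟨A, hA, hAX⟩, by simp, ?_⟩
    intro h
    have : z ∈ ({x, y} : Finset (Fin m)) := h ▸ (by simp [hX] : z ∈ X)
    simp only [Finset.mem_insert, Finset.mem_singleton] at this
    tauto
  rw [heq, famRestrictU, Finset.mem_filter, Finset.mem_image] at hmem1
  obtain ⟨⟨E, hEsp, hE⟩, _⟩ := hmem1
  exact ⟨E, hEsp, hE⟩

lemma utree_eq_of_agree (hm : 4 ≤ m) (T₁ T₂ : UTree m)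
    (hres : ∀ X ∈ quartets m, famResolvedU T₁.splits X ↔ famResolvedU T₂.splits X)
    (hrestr : ∀ X ∈ quartets m, famResolvedU T₁.splits X → famResolvedU T₂.splits X →
      famRestrictU T₁.splits X = famRestrictU T₂.splits X) :
    T₁ = T₂ := by
  apply UTree.splits_injective
  apply Finset.Subset.antisymm
  · exact utree_splits_subset hm T₁ T₂ (fun X hX h => (hres X hX).1 h) hrestr
  · exact utree_splits_subset hm T₂ T₁ (fun X hX h => (hres X hX).2 h)
      (fun X hX h1 h2 => (hrestr X hX h2 h1).symm)

end UUnique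

section PdistGeneral

variable {n : ℕ}

lemma famSetD_comm (F G : Finset (Finset (Fin n))) : famSetD F G = famSetD G F := by
  unfold famSetD
  apply Finset.filter_congr
  intro X _
  constructor
  · rintro ⟨h1, h2, h3⟩; exact ⟨h2, h1, Ne.symm h3⟩
  · rintro ⟨h1, h2, h3⟩; exact ⟨h2, h1, Ne.symm h3⟩

lemma famSetR1_eq (F G : Finset (Finset (Fin n))) : famSetR1 F G = famSetR2 G F := rfl

lemma famPdist_comm (p : ℝ) (F G : Finset (Finset (Fin n))) :
    famPdist p F G = famPdist p G F := by
  unfold famPdist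
  rw [famSetD_comm, famSetR1_eq F G, show famSetR2 F G = famSetR1 G F from rfl]
  ring

lemma famPdist_self (p : ℝ) (F : Finset (Finset (Fin n))) : famPdist p F F = 0 := by
  unfold famPdist
  have h1 : famSetD F F = ∅ := by
    rw [famSetD, Finset.filter_eq_empty_iff]; tauto
  have h2 : famSetR1 F F = ∅ := by
    rw [famSetR1, Finset.filter_eq_empty_iff]; tauto
  have h3 : famSetR2 F F = ∅ := by
    rw [famSetR2, Finset.filter_eq_empty_iff]; tauto
  rw [h1, h2, h3]; simp

lemma famPdist_nonneg {p : ℝ} (hp : 0 ≤ p) (F G : Finset (Finset (Fin n))) :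
    0 ≤ famPdist p F G := by
  unfold famPdist
  positivity

lemma famPdist_eq_zero {p : ℝ} (hp : 0 < p) {F G : Finset (Finset (Fin n))}
    (h : famPdist p F G = 0) :
    famSetD F G = ∅ ∧ famSetR1 F G = ∅ ∧ famSetR2 F G = ∅ := by
  unfold famPdist at h
  have c1 : (0:ℝ) ≤ ((famSetD F G).card : ℝ) := Nat.cast_nonneg _
  have c2 : (0:ℝ) ≤ ((famSetR1 F G).card : ℝ) := Nat.cast_nonneg _
  have c3 : (0:ℝ) ≤ ((famSetR2 F G).card : ℝ) := Nat.cast_nonneg _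
  have h1 : ((famSetD F G).card : ℝ) = 0 := by nlinarith
  have h2 : ((famSetR1 F G).card : ℝ) = 0 := by nlinarith
  have h3 : ((famSetR2 F G).card : ℝ) = 0 := by nlinarith
  exact ⟨Finset.card_eq_zero.1 (by exact_mod_cast h1),
    Finset.card_eq_zero.1 (by exact_mod_cast h2),
    Finset.card_eq_zero.1 (by exact_mod_cast h3)⟩

lemma famSetDU_comm {m : ℕ} (F G : Finset (Finset (Fin m))) : famSetDU F G = famSetDU G F := by
  unfold famSetDU
  apply Finset.filter_congr
  intro X _
  constructor
  · rintro ⟨h1, h2, h3⟩; exact ⟨h2, h1, Ne.symm h3⟩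
  · rintro ⟨h1, h2, h3⟩; exact ⟨h2, h1, Ne.symm h3⟩

lemma famPdistU_comm {m : ℕ} (p : ℝ) (F G : Finset (Finset (Fin m))) :
    famPdistU p F G = famPdistU p G F := by
  unfold famPdistU
  rw [famSetDU_comm, show famSetR1U F G = famSetR2U G F from rfl,
    show famSetR2U F G = famSetR1U G F from rfl]
  ring

lemma famPdistU_self {m : ℕ} (p : ℝ) (F : Finset (Finset (Fin m))) : famPdistU p F F = 0 := by
  unfold famPdistU
  have h1 : famSetDU F F = ∅ := by
    rw [famSetDU, Finset.filter_eq_empty_iff]; tauto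
  have h2 : famSetR1U F F = ∅ := by
    rw [famSetR1U, Finset.filter_eq_empty_iff]; tauto
  have h3 : famSetR2U F F = ∅ := by
    rw [famSetR2U, Finset.filter_eq_empty_iff]; tauto
  rw [h1, h2, h3]; simp

lemma famPdistU_nonneg {m : ℕ} {p : ℝ} (hp : 0 ≤ p) (F G : Finset (Finset (Fin m))) :
    0 ≤ famPdistU p F G := by
  unfold famPdistU
  positivity

lemma famPdistU_eq_zero {m : ℕ} {p : ℝ} (hp : 0 < p) {F G : Finset (Finset (Fin m))}
    (h : famPdistU p F G = 0) :
    famSetDU F G = ∅ ∧ famSetR1U F G = ∅ ∧ famSetR2U F G = ∅ := by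
  unfold famPdistU at h
  have c1 : (0:ℝ) ≤ ((famSetDU F G).card : ℝ) := Nat.cast_nonneg _
  have c2 : (0:ℝ) ≤ ((famSetR1U F G).card : ℝ) := Nat.cast_nonneg _
  have c3 : (0:ℝ) ≤ ((famSetR2U F G).card : ℝ) := Nat.cast_nonneg _
  have h1 : ((famSetDU F G).card : ℝ) = 0 := by nlinarith
  have h2 : ((famSetR1U F G).card : ℝ) = 0 := by nlinarith
  have h3 : ((famSetR2U F G).card : ℝ) = 0 := by nlinarith
  exact ⟨Finset.card_eq_zero.1 (by exact_mod_cast h1),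
    Finset.card_eq_zero.1 (by exact_mod_cast h2),
    Finset.card_eq_zero.1 (by exact_mod_cast h3)⟩

end PdistGeneral

section RTrees

variable {n : ℕ}

/-- The cluster family of the rooted star. -/
def starFam (n : ℕ) : Finset (Finset (Fin n)) :=
  insert Finset.univ (Finset.univ.image fun x => ({x} : Finset (Fin n)))

lemma mem_starFam {C : Finset (Fin n)} :
    C ∈ starFam n ↔ C = Finset.univ ∨ ∃ x, C = {x} := by
  simp only [starFam, Finset.mem_insert, Finset.mem_image, Finset.mem_univ, true_and]
  constructor
  · rintro (h | ⟨x, hx⟩)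
    · exact Or.inl h
    · exact Or.inr ⟨x, hx.symm⟩
  · rintro (h | ⟨x, hx⟩)
    · exact Or.inl h
    · exact Or.inr ⟨x, hx.symm⟩

lemma starFam_laminar (C : Finset (Fin n)) (hC : C ∈ starFam n)
    (D : Finset (Fin n)) (hD : D ∈ starFam n) :
    C ⊆ D ∨ D ⊆ C ∨ C ∩ D = ∅ := by
  rcases mem_starFam.1 hC with rfl | ⟨x, rfl⟩
  · exact Or.inr (Or.inl (Finset.subset_univ D))
  rcases mem_starFam.1 hD with rfl | ⟨y, rfl⟩
  · exact Or.inl (Finset.subset_univ _)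
  by_cases hxy : x = y
  · subst hxy; exact Or.inl Finset.Subset.rfl
  · refine Or.inr (Or.inr ?_)
    rw [Finset.inter_singleton_of_notMem (Finset.notMem_singleton.2 (Ne.symm hxy))]

lemma pair_starFam_laminar {a b : Fin n} (C : Finset (Fin n)) (hC : C ∈ starFam n) :
    ({a, b} : Finset (Fin n)) ⊆ C ∨ C ⊆ {a, b} ∨ ({a, b} : Finset (Fin n)) ∩ C = ∅ := by
  rcases mem_starFam.1 hC with rfl | ⟨x, rfl⟩
  · exact Or.inl (Finset.subset_univ _)
  by_cases hx : x ∈ ({a, b} : Finset (Fin n))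
  · exact Or.inr (Or.inl (Finset.singleton_subset_iff.2 hx))
  · exact Or.inr (Or.inr (Finset.inter_singleton_of_notMem hx))

lemma pair_not_mem_starFam (hn : 3 ≤ n) {a b : Fin n} (hab : a ≠ b) :
    ({a, b} : Finset (Fin n)) ∉ starFam n := by
  rw [mem_starFam]
  rintro (h | ⟨x, hx⟩)
  · have := congrArg Finset.card h
    rw [Finset.card_pair hab, Finset.card_univ, Fintype.card_fin] at this
    omega
  · have := congrArg Finset.card hx
    rw [Finset.card_pair hab, Finset.card_singleton] at this
    omega

noncomputable def starRT (n : ℕ) (hn : 3 ≤ n) : RTree n where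
  clusters := starFam n
  univ_mem := by simp [starFam]
  singleton_mem := fun x => by simp [starFam]
  empty_not_mem := by
    rw [mem_starFam]
    rintro (h | ⟨x, hx⟩)
    · have := congrArg Finset.card h
      rw [Finset.card_empty, Finset.card_univ, Fintype.card_fin] at this
      omega
    · exact (Finset.singleton_ne_empty x) hx.symm
  laminar := starFam_laminar

noncomputable def pairRT (n : ℕ) (hn : 3 ≤ n) (a b : Fin n) (hab : a ≠ b) : RTree n where
  clusters := insert {a, b} (starFam n)
  univ_mem := Finset.mem_insert_of_mem (by simp [starFam])
  singleton_mem := fun x => Finset.mem_insert_of_mem (by simp [starFam])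
  empty_not_mem := by
    rw [Finset.mem_insert]
    rintro (h | h)
    · have := congrArg Finset.card h
      rw [Finset.card_empty, Finset.card_pair hab] at this
      omega
    · exact (starRT n hn).empty_not_mem h
  laminar := by
    intro C hC D hD
    rcases Finset.mem_insert.1 hC with rfl | hC' <;>
      rcases Finset.mem_insert.1 hD with rfl | hD'
    · exact Or.inl Finset.Subset.rfl
    · rcases pair_starFam_laminar (a := a) (b := b) D hD' with h | h | h
      · exact Or.inl h
      · exact Or.inr (Or.inl h)
      · exact Or.inr (Or.inr h)
    · rcases pair_starFam_laminar (a := a) (b := b) C hC' with h | h | h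
      · exact Or.inr (Or.inl h)
      · exact Or.inl h
      · exact Or.inr (Or.inr (by rwa [Finset.inter_comm] at h))
    · exact starFam_laminar C hC' D hD'

lemma not_resolved_starFam {X : Finset (Fin n)} (hX : X.card = 3) :
    ¬ famResolved (starFam n) X := by
  rintro ⟨C, hC, hcard⟩
  rcases mem_starFam.1 hC with rfl | ⟨x, rfl⟩
  · rw [Finset.univ_inter, hX] at hcard; omega
  · have hsub : ({x} : Finset (Fin n)) ∩ X ⊆ {x} := Finset.inter_subset_left
    have hle := Finset.card_le_card hsub
    rw [hcard, Finset.card_singleton] at hle; omega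

lemma resolved_pairFam {a b : Fin n} (hab : a ≠ b) {X : Finset (Fin n)} (hX : X.card = 3) :
    famResolved (insert ({a, b} : Finset (Fin n)) (starFam n)) X ↔ a ∈ X ∧ b ∈ X := by
  constructor
  · rintro ⟨C, hC, hcard⟩
    rcases Finset.mem_insert.1 hC with rfl | hC'
    · have hsub : ({a, b} : Finset (Fin n)) ∩ X ⊆ {a, b} := Finset.inter_subset_left
      have heq : ({a, b} : Finset (Fin n)) ∩ X = {a, b} := by
        apply Finset.eq_of_subset_of_card_le hsub
        rw [hcard, Finset.card_pair hab]
      constructor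
      · have ha : a ∈ ({a, b} : Finset (Fin n)) ∩ X := by rw [heq]; simp
        exact (Finset.mem_inter.1 ha).2
      · have hb : b ∈ ({a, b} : Finset (Fin n)) ∩ X := by rw [heq]; simp
        exact (Finset.mem_inter.1 hb).2
    · exact absurd ⟨C, hC', hcard⟩ (not_resolved_starFam hX)
  · rintro ⟨ha, hb⟩
    refine ⟨{a, b}, Finset.mem_insert_self _ _, ?_⟩
    rw [Finset.inter_eq_left.2 (by rw [Finset.insert_subset_iff, Finset.singleton_subset_iff]; exact ⟨ha, hb⟩), Finset.card_pair hab]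

lemma pairFam_restrict_ne {a b c : Fin n} (hab : a ≠ b) (hac : a ≠ c) (hbc : b ≠ c)
    {X : Finset (Fin n)} (hX : X.card = 3) (haX : a ∈ X) (hbX : b ∈ X) (hcX : c ∈ X) :
    famRestrict (insert ({a, b} : Finset (Fin n)) (starFam n)) X ≠
      famRestrict (insert ({a, c} : Finset (Fin n)) (starFam n)) X := by
  intro h
  have hmem : ({a, b} : Finset (Fin n)) ∈
      famRestrict (insert ({a, b} : Finset (Fin n)) (starFam n)) X := by
    rw [famRestrict, Finset.mem_filter]
    constructor
    · exact Finset.mem_image.2 ⟨{a, b}, Finset.mem_insert_self _ _,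
        Finset.inter_eq_left.2 (by rw [Finset.insert_subset_iff, Finset.singleton_subset_iff]; exact ⟨haX, hbX⟩)⟩
    · simp
  rw [h, famRestrict, Finset.mem_filter, Finset.mem_image] at hmem
  obtain ⟨⟨E, hE, hEX⟩, -⟩ := hmem
  rcases Finset.mem_insert.1 hE with rfl | hE'
  · rw [Finset.inter_eq_left.2 (by rw [Finset.insert_subset_iff, Finset.singleton_subset_iff]; exact ⟨haX, hcX⟩)] at hEX
    have hc : c ∈ ({a, b} : Finset (Fin n)) := by rw [← hEX]; simp
    simp only [Finset.mem_insert, Finset.mem_singleton] at hc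
    tauto
  · rcases mem_starFam.1 hE' with rfl | ⟨x, rfl⟩
    · rw [Finset.univ_inter] at hEX
      have := congrArg Finset.card hEX
      rw [hX, Finset.card_pair hab] at this; omega
    · have hsub : ({x} : Finset (Fin n)) ∩ X ⊆ {x} := Finset.inter_subset_left
      have hle := Finset.card_le_card hsub
      rw [hEX, Finset.card_pair hab, Finset.card_singleton] at hle; omega

end RTrees

section UTrees

variable {m : ℕ}

/-- The split system of the unrooted star. -/
def starFamU (m : ℕ) : Finset (Finset (Fin m)) :=
  (Finset.univ.image fun x => ({x} : Finset (Fin m))) ∪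
    (Finset.univ.image fun x => Finset.univ \ ({x} : Finset (Fin m)))

lemma mem_starFamU {C : Finset (Fin m)} :
    C ∈ starFamU m ↔ (∃ x, C = {x}) ∨ ∃ x, C = Finset.univ \ {x} := by
  simp only [starFamU, Finset.mem_union, Finset.mem_image, Finset.mem_univ, true_and]
  constructor
  · rintro (⟨x, hx⟩ | ⟨x, hx⟩)
    · exact Or.inl ⟨x, hx.symm⟩
    · exact Or.inr ⟨x, hx.symm⟩
  · rintro (⟨x, hx⟩ | ⟨x, hx⟩)
    · exact Or.inl ⟨x, hx.symm⟩
    · exact Or.inr ⟨x, hx.symm⟩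

lemma card_univ_fin (m : ℕ) : (Finset.univ : Finset (Fin m)).card = m := by
  rw [Finset.card_univ, Fintype.card_fin]

lemma sdiff_ne_empty_of_card {S : Finset (Fin m)} (h : S.card < m) :
    Finset.univ \ S ≠ ∅ := by
  intro he
  rw [Finset.sdiff_eq_empty_iff_subset] at he
  have := Finset.card_le_card he
  rw [card_univ_fin] at this; omega

lemma compat_symm {A B : Finset (Fin m)}
    (h : A ⊆ B ∨ B ⊆ A ∨ A ∩ B = ∅ ∨ A ∪ B = Finset.univ) :
    B ⊆ A ∨ A ⊆ B ∨ B ∩ A = ∅ ∨ B ∪ A = Finset.univ := by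
  rw [Finset.inter_comm, Finset.union_comm]; tauto

lemma starFamU_compat (C : Finset (Fin m)) (hC : C ∈ starFamU m)
    (D : Finset (Fin m)) (hD : D ∈ starFamU m) :
    C ⊆ D ∨ D ⊆ C ∨ C ∩ D = ∅ ∨ C ∪ D = Finset.univ := by
  rcases mem_starFamU.1 hC with ⟨x, rfl⟩ | ⟨x, rfl⟩ <;>
    rcases mem_starFamU.1 hD with ⟨y, rfl⟩ | ⟨y, rfl⟩
  · by_cases hxy : x = y
    · subst hxy; exact Or.inl Finset.Subset.rfl
    · exact Or.inr (Or.inr (Or.inl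
        (Finset.inter_singleton_of_notMem (Finset.notMem_singleton.2 (Ne.symm hxy)))))
  · by_cases hxy : x = y
    · subst hxy
      refine Or.inr (Or.inr (Or.inl ?_))
      rw [Finset.singleton_inter_of_notMem (by simp)]
    · refine Or.inl (Finset.singleton_subset_iff.2 ?_)
      rw [Finset.mem_sdiff]
      exact ⟨Finset.mem_univ _, Finset.notMem_singleton.2 hxy⟩
  · by_cases hxy : x = y
    · subst hxy
      refine Or.inr (Or.inr (Or.inl ?_))
      rw [Finset.inter_singleton_of_notMem (by simp)]
    · refine Or.inr (Or.inl (Finset.singleton_subset_iff.2 ?_))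
      rw [Finset.mem_sdiff]
      exact ⟨Finset.mem_univ _, Finset.notMem_singleton.2 (Ne.symm hxy)⟩
  · by_cases hxy : x = y
    · subst hxy; exact Or.inl Finset.Subset.rfl
    · refine Or.inr (Or.inr (Or.inr ?_))
      apply Finset.eq_univ_iff_forall.2
      intro t
      rw [Finset.mem_union, Finset.mem_sdiff, Finset.mem_sdiff]
      by_cases htx : t = x
      · subst htx
        exact Or.inr ⟨Finset.mem_univ _, Finset.notMem_singleton.2 hxy⟩
      · exact Or.inl ⟨Finset.mem_univ _, Finset.notMem_singleton.2 htx⟩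

noncomputable def starUT (m : ℕ) (hm : 4 ≤ m) : UTree m where
  splits := starFamU m
  empty_not_mem := by
    rw [mem_starFamU]
    rintro (⟨x, hx⟩ | ⟨x, hx⟩)
    · exact (Finset.singleton_ne_empty x) hx.symm
    · exact sdiff_ne_empty_of_card (by rw [Finset.card_singleton]; omega) hx.symm
  trivial_mem := fun x => Or.inr (mem_starFamU.2 (Or.inl ⟨x, rfl⟩))
  compl_mem := by
    intro A hA
    rcases mem_starFamU.1 hA with ⟨x, rfl⟩ | ⟨x, rfl⟩
    · exact mem_starFamU.2 (Or.inr ⟨x, rfl⟩)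
    · refine mem_starFamU.2 (Or.inl ⟨x, ?_⟩)
      simp
  compat := starFamU_compat

/-- The split system of the tree with the single nontrivial split `{a,b} | rest`. -/
def pairFamU (m : ℕ) (a b : Fin m) : Finset (Finset (Fin m)) :=
  insert {a, b} (insert (Finset.univ \ {a, b}) (starFamU m))

lemma pair_compat_starFamU {a b : Fin m} (C : Finset (Fin m)) (hC : C ∈ starFamU m) :
    ({a, b} : Finset (Fin m)) ⊆ C ∨ C ⊆ {a, b} ∨ ({a, b} : Finset (Fin m)) ∩ C = ∅ ∨
      ({a, b} : Finset (Fin m)) ∪ C = Finset.univ := by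
  rcases mem_starFamU.1 hC with ⟨x, rfl⟩ | ⟨x, rfl⟩
  · by_cases hx : x ∈ ({a, b} : Finset (Fin m))
    · exact Or.inr (Or.inl (Finset.singleton_subset_iff.2 hx))
    · exact Or.inr (Or.inr (Or.inl (Finset.inter_singleton_of_notMem hx)))
  · by_cases hx : x ∈ ({a, b} : Finset (Fin m))
    · refine Or.inr (Or.inr (Or.inr ?_))
      apply Finset.eq_univ_iff_forall.2
      intro t
      rw [Finset.mem_union, Finset.mem_sdiff]
      by_cases htx : t = x
      · subst htx; exact Or.inl hx
      · exact Or.inr ⟨Finset.mem_univ _, Finset.notMem_singleton.2 htx⟩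
    · refine Or.inl ?_
      intro t ht
      rw [Finset.mem_sdiff]
      refine ⟨Finset.mem_univ _, Finset.notMem_singleton.2 ?_⟩
      rintro rfl; exact hx ht
  
lemma pairc_compat_starFamU {a b : Fin m} (C : Finset (Fin m)) (hC : C ∈ starFamU m) :
    Finset.univ \ ({a, b} : Finset (Fin m)) ⊆ C ∨ C ⊆ Finset.univ \ ({a, b} : Finset (Fin m)) ∨
      (Finset.univ \ ({a, b} : Finset (Fin m))) ∩ C = ∅ ∨
      Finset.univ \ ({a, b} : Finset (Fin m)) ∪ C = Finset.univ := by
  rcases mem_starFamU.1 hC with ⟨x, rfl⟩ | ⟨x, rfl⟩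
  · by_cases hx : x ∈ ({a, b} : Finset (Fin m))
    · refine Or.inr (Or.inr (Or.inl ?_))
      rw [Finset.inter_singleton_of_notMem (by simp [hx])]
    · refine Or.inr (Or.inl (Finset.singleton_subset_iff.2 ?_))
      rw [Finset.mem_sdiff]
      exact ⟨Finset.mem_univ _, hx⟩
  · by_cases hx : x ∈ ({a, b} : Finset (Fin m))
    · exact Or.inl (Finset.sdiff_subset_sdiff Finset.Subset.rfl
        (Finset.singleton_subset_iff.2 hx))
    · refine Or.inr (Or.inr (Or.inr ?_))
      apply Finset.eq_univ_iff_forall.2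
      intro t
      rw [Finset.mem_union, Finset.mem_sdiff, Finset.mem_sdiff]
      by_cases htx : t = x
      · subst htx; exact Or.inl ⟨Finset.mem_univ _, hx⟩
      · exact Or.inr ⟨Finset.mem_univ _, Finset.notMem_singleton.2 htx⟩

lemma pair_not_mem_starFamU (hm : 4 ≤ m) {a b : Fin m} (hab : a ≠ b) :
    ({a, b} : Finset (Fin m)) ∉ starFamU m := by
  rw [mem_starFamU]
  rintro (⟨x, hx⟩ | ⟨x, hx⟩)
  · have := congrArg Finset.card hx
    rw [Finset.card_pair hab, Finset.card_singleton] at this; omega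
  · have := congrArg Finset.card hx
    rw [Finset.card_pair hab, Finset.card_sdiff_of_subset (Finset.subset_univ _),
      card_univ_fin, Finset.card_singleton] at this
    omega

noncomputable def pairUT (m : ℕ) (hm : 4 ≤ m) (a b : Fin m) (hab : a ≠ b) : UTree m where
  splits := pairFamU m a b
  empty_not_mem := by
    rw [pairFamU, Finset.mem_insert, Finset.mem_insert]
    rintro (h | h | h)
    · have := congrArg Finset.card h
      rw [Finset.card_empty, Finset.card_pair hab] at this; omega
    · exact sdiff_ne_empty_of_card (by rw [Finset.card_pair hab]; omega) h.symm
    · exact (starUT m hm).empty_not_mem h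
  trivial_mem := fun x =>
    Or.inr (Finset.mem_insert_of_mem (Finset.mem_insert_of_mem
      (((starUT m hm).trivial_mem x).resolve_left (by
        intro h
        have := congrArg Finset.card h
        rw [Finset.card_singleton, card_univ_fin] at this; omega))))
  compl_mem := by
    intro A hA
    rw [pairFamU, Finset.mem_insert, Finset.mem_insert] at hA
    rcases hA with rfl | rfl | hA
    · exact Finset.mem_insert_of_mem (Finset.mem_insert_self _ _)
    · rw [Finset.sdiff_sdiff_self_left, Finset.univ_inter]
      exact Finset.mem_insert_self _ _
    · exact Finset.mem_insert_of_mem (Finset.mem_insert_of_mem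
        ((starUT m hm).compl_mem A hA))
  compat := by
    intro C hC D hD
    rw [pairFamU, Finset.mem_insert, Finset.mem_insert] at hC hD
    have hPPc : ({a, b} : Finset (Fin m)) ∩ (Finset.univ \ {a, b}) = ∅ := by
      ext t; simp
    rcases hC with rfl | rfl | hC' <;> rcases hD with rfl | rfl | hD'
    · exact Or.inl Finset.Subset.rfl
    · exact Or.inr (Or.inr (Or.inl hPPc))
    · exact pair_compat_starFamU D hD'
    · exact compat_symm (Or.inr (Or.inr (Or.inl hPPc)))
    · exact Or.inl Finset.Subset.rfl
    · exact pairc_compat_starFamU D hD'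
    · exact compat_symm (pair_compat_starFamU C hC')
    · exact compat_symm (pairc_compat_starFamU C hC')
    · exact starFamU_compat C hC' D hD'

lemma sdiff_inter_eq {S X : Finset (Fin m)} :
    (Finset.univ \ S) ∩ X = X \ S := by
  ext t; simp [Finset.mem_sdiff, and_comm]

lemma card_sdiff_singleton {X : Finset (Fin m)} {x : Fin m} (hX : X.card = 4) :
    (X \ ({x} : Finset (Fin m))).card = 3 ∨ (X \ ({x} : Finset (Fin m))).card = 4 := by
  by_cases hx : x ∈ X
  · left
    rw [Finset.sdiff_singleton_eq_erase, Finset.card_erase_of_mem hx, hX]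
  · right
    rw [Finset.sdiff_singleton_eq_erase, Finset.erase_eq_of_notMem hx, hX]

lemma not_resolved_starFamU {X : Finset (Fin m)} (hX : X.card = 4) :
    ¬ famResolvedU (starFamU m) X := by
  rintro ⟨C, hC, hcard⟩
  rcases mem_starFamU.1 hC with ⟨x, rfl⟩ | ⟨x, rfl⟩
  · have hsub : ({x} : Finset (Fin m)) ∩ X ⊆ {x} := Finset.inter_subset_left
    have hle := Finset.card_le_card hsub
    rw [hcard, Finset.card_singleton] at hle; omega
  · rw [sdiff_inter_eq] at hcard
    rcases card_sdiff_singleton (X := X) (x := x) hX with h | h <;> omega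

lemma resolved_pairFamU {a b : Fin m} (hab : a ≠ b) {X : Finset (Fin m)} (hX : X.card = 4) :
    famResolvedU (pairFamU m a b) X ↔ a ∈ X ∧ b ∈ X := by
  constructor
  · rintro ⟨C, hC, hcard⟩
    rw [pairFamU, Finset.mem_insert, Finset.mem_insert] at hC
    have key : (({a, b} : Finset (Fin m)) ∩ X).card = 2 → a ∈ X ∧ b ∈ X := by
      intro h2
      have hsub : ({a, b} : Finset (Fin m)) ∩ X ⊆ {a, b} := Finset.inter_subset_left
      have heq : ({a, b} : Finset (Fin m)) ∩ X = {a, b} := by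
        apply Finset.eq_of_subset_of_card_le hsub
        rw [h2, Finset.card_pair hab]
      constructor
      · have ha : a ∈ ({a, b} : Finset (Fin m)) ∩ X := by rw [heq]; simp
        exact (Finset.mem_inter.1 ha).2
      · have hb : b ∈ ({a, b} : Finset (Fin m)) ∩ X := by rw [heq]; simp
        exact (Finset.mem_inter.1 hb).2
    rcases hC with rfl | rfl | hC'
    · exact key hcard
    · rw [sdiff_inter_eq] at hcard
      have hsum := Finset.card_inter_add_card_sdiff X ({a, b} : Finset (Fin m))
      rw [hcard, hX] at hsum
      exact key (by rw [Finset.inter_comm]; omega)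
    · exact absurd ⟨C, hC', hcard⟩ (not_resolved_starFamU hX)
  · rintro ⟨ha, hb⟩
    refine ⟨{a, b}, Finset.mem_insert_self _ _, ?_⟩
    rw [Finset.inter_eq_left.2
      (by rw [Finset.insert_subset_iff, Finset.singleton_subset_iff]; exact ⟨ha, hb⟩),
      Finset.card_pair hab]

lemma pairFamU_restrict_ne {a b c : Fin m} (hab : a ≠ b) (hac : a ≠ c) (hbc : b ≠ c)
    {X : Finset (Fin m)} (hX : X.card = 4) (haX : a ∈ X) (hbX : b ∈ X) (hcX : c ∈ X) :
    famRestrictU (pairFamU m a b) X ≠ famRestrictU (pairFamU m a c) X := by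
  intro h
  have hmem : ({a, b} : Finset (Fin m)) ∈ famRestrictU (pairFamU m a b) X := by
    rw [famRestrictU, Finset.mem_filter]
    refine ⟨Finset.mem_image.2 ⟨{a, b}, Finset.mem_insert_self _ _,
      Finset.inter_eq_left.2
        (by rw [Finset.insert_subset_iff, Finset.singleton_subset_iff]; exact ⟨haX, hbX⟩)⟩,
      by simp, ?_⟩
    intro hh
    have := congrArg Finset.card hh
    rw [Finset.card_pair hab, hX] at this; omega
  rw [h, famRestrictU, Finset.mem_filter, Finset.mem_image] at hmem
  obtain ⟨⟨E, hE, hEX⟩, -⟩ := hmem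
  rw [pairFamU, Finset.mem_insert, Finset.mem_insert] at hE
  rcases hE with rfl | rfl | hE'
  · rw [Finset.inter_eq_left.2
      (by rw [Finset.insert_subset_iff, Finset.singleton_subset_iff]; exact ⟨haX, hcX⟩)] at hEX
    have hc : c ∈ ({a, b} : Finset (Fin m)) := by rw [← hEX]; simp
    simp only [Finset.mem_insert, Finset.mem_singleton] at hc
    tauto
  · rw [sdiff_inter_eq] at hEX
    have ha : a ∈ X \ ({a, c} : Finset (Fin m)) := by rw [hEX]; simp
    rw [Finset.mem_sdiff] at ha
    exact ha.2 (by simp)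
  · rcases mem_starFamU.1 hE' with ⟨x, rfl⟩ | ⟨x, rfl⟩
    · have hsub : ({x} : Finset (Fin m)) ∩ X ⊆ {x} := Finset.inter_subset_left
      have hle := Finset.card_le_card hsub
      rw [hEX, Finset.card_pair hab, Finset.card_singleton] at hle; omega
    · rw [sdiff_inter_eq] at hEX
      have := congrArg Finset.card hEX
      rw [Finset.card_pair hab] at this
      rcases card_sdiff_singleton (X := X) (x := x) hX with h4 | h4 <;> omega

end UTrees

section MainAux

variable {n : ℕ}

lemma mem_triplets {X : Finset (Fin n)} : X ∈ triplets n ↔ X.card = 3 := by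
  rw [triplets, Finset.mem_powersetCard_univ]

lemma mem_quartets {m : ℕ} {X : Finset (Fin m)} : X ∈ quartets m ↔ X.card = 4 := by
  rw [quartets, Finset.mem_powersetCard_univ]

lemma famSetD_star_right (F : Finset (Finset (Fin n))) : famSetD F (starFam n) = ∅ := by
  rw [famSetD, Finset.filter_eq_empty_iff]
  intro X hX
  rintro ⟨-, h2, -⟩
  exact not_resolved_starFam (mem_triplets.1 hX) h2

lemma famSetR1_star_right (F : Finset (Finset (Fin n))) :
    famSetR1 F (starFam n) = (triplets n).filter (fun X => famResolved F X) := by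
  rw [famSetR1]
  apply Finset.filter_congr
  intro X hX
  have := not_resolved_starFam (X := X) (mem_triplets.1 hX)
  tauto

lemma famSetR2_star_right (F : Finset (Finset (Fin n))) : famSetR2 F (starFam n) = ∅ := by
  rw [famSetR2, Finset.filter_eq_empty_iff]
  intro X hX
  rintro ⟨h1, -⟩
  exact not_resolved_starFam (mem_triplets.1 hX) h1

lemma famPdist_star_right (p : ℝ) (F : Finset (Finset (Fin n))) :
    famPdist p F (starFam n) =
      p * ((triplets n).filter (fun X => famResolved F X)).card := by
  rw [famPdist, famSetD_star_right, famSetR1_star_right, famSetR2_star_right]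
  simp

lemma famPdist_pair_lt (hn : 3 ≤ n) {a b c : Fin n} (hab : a ≠ b) (hac : a ≠ c)
    (hbc : b ≠ c) {p : ℝ} (hp0 : 0 < p) (hp : p < 1 / 2) :
    famPdist p (insert {a, b} (starFam n)) (starFam n) +
      famPdist p (starFam n) (insert {a, c} (starFam n)) <
    famPdist p (insert {a, b} (starFam n)) (insert {a, c} (starFam n)) := by
  classical
  set F1 : Finset (Finset (Fin n)) := insert {a, b} (starFam n) with hF1
  set F3 : Finset (Finset (Fin n)) := insert {a, c} (starFam n) with hF3
  set X₀ : Finset (Fin n) := {a, b, c} with hX₀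
  have hX₀card : X₀.card = 3 := card_triple hab hac hbc
  have hboth : ∀ X ∈ triplets n, famResolved F1 X → famResolved F3 X → X = X₀ := by
    intro X hX h1 h3
    have hXc := mem_triplets.1 hX
    obtain ⟨haX, hbX⟩ := (resolved_pairFam hab hXc).1 h1
    obtain ⟨-, hcX⟩ := (resolved_pairFam hac hXc).1 h3
    have hsub : X₀ ⊆ X := by
      rw [hX₀, Finset.insert_subset_iff, Finset.insert_subset_iff,
        Finset.singleton_subset_iff]
      exact ⟨haX, hbX, hcX⟩
    exact (Finset.eq_of_subset_of_card_le hsub (le_of_eq (by rw [hXc, hX₀card]))).symm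
  have haX₀ : a ∈ X₀ := by simp [hX₀]
  have hbX₀ : b ∈ X₀ := by simp [hX₀]
  have hcX₀ : c ∈ X₀ := by simp [hX₀]
  have hres1X₀ : famResolved F1 X₀ := (resolved_pairFam hab hX₀card).2 ⟨haX₀, hbX₀⟩
  have hres3X₀ : famResolved F3 X₀ := (resolved_pairFam hac hX₀card).2 ⟨haX₀, hcX₀⟩
  have hX₀t : X₀ ∈ triplets n := mem_triplets.2 hX₀card
  have hD : famSetD F1 F3 = {X₀} := by
    ext X
    rw [famSetD, Finset.mem_filter, Finset.mem_singleton]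
    constructor
    · rintro ⟨hX, h1, h3, -⟩
      exact hboth X hX h1 h3
    · rintro rfl
      exact ⟨hX₀t, hres1X₀, hres3X₀,
        pairFam_restrict_ne hab hac hbc hX₀card haX₀ hbX₀ hcX₀⟩
  set A1 : Finset (Finset (Fin n)) := (triplets n).filter (fun X => famResolved F1 X)
    with hA1
  set A3 : Finset (Finset (Fin n)) := (triplets n).filter (fun X => famResolved F3 X)
    with hA3
  have hK1 : A1.filter (fun X => famResolved F3 X) = {X₀} := by
    rw [hA1, Finset.filter_filter]
    ext X
    rw [Finset.mem_filter, Finset.mem_singleton]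
    constructor
    · rintro ⟨hX, h1, h3⟩
      exact hboth X hX h1 h3
    · rintro rfl
      exact ⟨hX₀t, hres1X₀, hres3X₀⟩
  have hK3 : A3.filter (fun X => famResolved F1 X) = {X₀} := by
    rw [hA3, Finset.filter_filter]
    ext X
    rw [Finset.mem_filter, Finset.mem_singleton]
    constructor
    · rintro ⟨hX, h3, h1⟩
      exact hboth X hX h1 h3
    · rintro rfl
      exact ⟨hX₀t, hres3X₀, hres1X₀⟩
  have hR1 : famSetR1 F1 F3 = A1.filter (fun X => ¬ famResolved F3 X) := by
    rw [famSetR1, hA1, Finset.filter_filter]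
  have hR2 : famSetR2 F1 F3 = A3.filter (fun X => ¬ famResolved F1 X) := by
    rw [famSetR2, hA3, Finset.filter_filter]
  have hc1 : 1 + (famSetR1 F1 F3).card = A1.card := by
    have := Finset.card_filter_add_card_filter_not
      (s := A1) (p := fun X => famResolved F3 X)
    rw [hK1, Finset.card_singleton] at this
    rw [hR1]
    exact this
  have hc3 : 1 + (famSetR2 F1 F3).card = A3.card := by
    have := Finset.card_filter_add_card_filter_not
      (s := A3) (p := fun X => famResolved F1 X)
    rw [hK3, Finset.card_singleton] at this
    rw [hR2]
    exact this
  have heq13 : famPdist p F1 F3 =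
      1 + p * (((famSetR1 F1 F3).card : ℝ) + ((famSetR2 F1 F3).card : ℝ)) := by
    rw [famPdist, hD, Finset.card_singleton]
    norm_num
  rw [famPdist_star_right, famPdist_comm, famPdist_star_right, heq13, ← hA1, ← hA3]
  have ha1 : (A1.card : ℝ) = 1 + ((famSetR1 F1 F3).card : ℝ) := by exact_mod_cast hc1.symm
  have ha3 : (A3.card : ℝ) = 1 + ((famSetR2 F1 F3).card : ℝ) := by exact_mod_cast hc3.symm
  rw [ha1, ha3]
  have h1 : (0:ℝ) ≤ ((famSetR1 F1 F3).card : ℝ) := Nat.cast_nonneg _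
  have h2 : (0:ℝ) ≤ ((famSetR2 F1 F3).card : ℝ) := Nat.cast_nonneg _
  nlinarith

lemma famSetDU_star_right {m : ℕ} (F : Finset (Finset (Fin m))) :
    famSetDU F (starFamU m) = ∅ := by
  rw [famSetDU, Finset.filter_eq_empty_iff]
  intro X hX
  rintro ⟨-, h2, -⟩
  exact not_resolved_starFamU (mem_quartets.1 hX) h2

lemma famSetR1U_star_right {m : ℕ} (F : Finset (Finset (Fin m))) :
    famSetR1U F (starFamU m) = (quartets m).filter (fun X => famResolvedU F X) := by
  rw [famSetR1U]
  apply Finset.filter_congr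
  intro X hX
  have := not_resolved_starFamU (X := X) (mem_quartets.1 hX)
  tauto

lemma famSetR2U_star_right {m : ℕ} (F : Finset (Finset (Fin m))) :
    famSetR2U F (starFamU m) = ∅ := by
  rw [famSetR2U, Finset.filter_eq_empty_iff]
  intro X hX
  rintro ⟨h1, -⟩
  exact not_resolved_starFamU (mem_quartets.1 hX) h1

lemma famPdistU_star_right {m : ℕ} (p : ℝ) (F : Finset (Finset (Fin m))) :
    famPdistU p F (starFamU m) =
      p * ((quartets m).filter (fun X => famResolvedU F X)).card := by
  rw [famPdistU, famSetDU_star_right, famSetR1U_star_right, famSetR2U_star_right]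
  simp

lemma famPdistU_pair_lt {m : ℕ} (hm : 4 ≤ m) {a b c e : Fin m} (hab : a ≠ b)
    (hac : a ≠ c) (hbc : b ≠ c) (hea : e ≠ a) (heb : e ≠ b) (hec : e ≠ c)
    {p : ℝ} (hp0 : 0 < p) (hp : p < 1 / 2) :
    famPdistU p (pairFamU m a b) (starFamU m) +
      famPdistU p (starFamU m) (pairFamU m a c) <
    famPdistU p (pairFamU m a b) (pairFamU m a c) := by
  classical
  set F1 : Finset (Finset (Fin m)) := pairFamU m a b with hF1
  set F3 : Finset (Finset (Fin m)) := pairFamU m a c with hF3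
  set X₀ : Finset (Fin m) := {a, b, c, e} with hX₀
  have hX₀card : X₀.card = 4 :=
    card_quad hab hac (Ne.symm hea) hbc (Ne.symm heb) (Ne.symm hec)
  -- every quartet resolved in both has different restrictions
  have hboth : ∀ X ∈ quartets m, famResolvedU F1 X → famResolvedU F3 X →
      famRestrictU F1 X ≠ famRestrictU F3 X := by
    intro X hX h1 h3
    have hXc := mem_quartets.1 hX
    obtain ⟨haX, hbX⟩ := (resolved_pairFamU hab hXc).1 h1
    obtain ⟨-, hcX⟩ := (resolved_pairFamU hac hXc).1 h3
    exact pairFamU_restrict_ne hab hac hbc hXc haX hbX hcX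
  have haX₀ : a ∈ X₀ := by simp [hX₀]
  have hbX₀ : b ∈ X₀ := by simp [hX₀]
  have hcX₀ : c ∈ X₀ := by simp [hX₀]
  have hres1X₀ : famResolvedU F1 X₀ := (resolved_pairFamU hab hX₀card).2 ⟨haX₀, hbX₀⟩
  have hres3X₀ : famResolvedU F3 X₀ := (resolved_pairFamU hac hX₀card).2 ⟨haX₀, hcX₀⟩
  have hX₀t : X₀ ∈ quartets m := mem_quartets.2 hX₀card
  set A1 : Finset (Finset (Fin m)) := (quartets m).filter (fun X => famResolvedU F1 X)
    with hA1
  set A3 : Finset (Finset (Fin m)) := (quartets m).filter (fun X => famResolvedU F3 X)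
    with hA3
  set K1 : Finset (Finset (Fin m)) := A1.filter (fun X => famResolvedU F3 X) with hK1
  set K3 : Finset (Finset (Fin m)) := A3.filter (fun X => famResolvedU F1 X) with hK3
  have hKeq : K3 = K1 := by
    rw [hK1, hK3, hA1, hA3, Finset.filter_filter, Finset.filter_filter]
    apply Finset.filter_congr
    intro X _
    tauto
  have hD : famSetDU F1 F3 = K1 := by
    rw [famSetDU, hK1, hA1, Finset.filter_filter]
    apply Finset.filter_congr
    intro X hX
    constructor
    · rintro ⟨h1, h3, -⟩; exact ⟨h1, h3⟩
    · rintro ⟨h1, h3⟩; exact ⟨h1, h3, hboth X hX h1 h3⟩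
  have hKpos : 1 ≤ K1.card := by
    rw [Finset.one_le_card]
    refine ⟨X₀, ?_⟩
    rw [hK1, hA1, Finset.filter_filter, Finset.mem_filter]
    exact ⟨hX₀t, hres1X₀, hres3X₀⟩
  have hR1 : famSetR1U F1 F3 = A1.filter (fun X => ¬ famResolvedU F3 X) := by
    rw [famSetR1U, hA1, Finset.filter_filter]
  have hR2 : famSetR2U F1 F3 = A3.filter (fun X => ¬ famResolvedU F1 X) := by
    rw [famSetR2U, hA3, Finset.filter_filter]
  have hc1 : K1.card + (famSetR1U F1 F3).card = A1.card := by
    have := Finset.card_filter_add_card_filter_not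
      (s := A1) (p := fun X => famResolvedU F3 X)
    rw [hR1]
    exact this
  have hc3 : K1.card + (famSetR2U F1 F3).card = A3.card := by
    have := Finset.card_filter_add_card_filter_not
      (s := A3) (p := fun X => famResolvedU F1 X)
    rw [hR2, ← hKeq]
    exact this
  have heq13 : famPdistU p F1 F3 = (K1.card : ℝ) +
      p * (((famSetR1U F1 F3).card : ℝ) + ((famSetR2U F1 F3).card : ℝ)) := by
    rw [famPdistU, hD]
  rw [famPdistU_star_right, famPdistU_comm, famPdistU_star_right, heq13, ← hA1, ← hA3]
  have ha1 : (A1.card : ℝ) = (K1.card : ℝ) + ((famSetR1U F1 F3).card : ℝ) := by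
    exact_mod_cast hc1.symm
  have ha3 : (A3.card : ℝ) = (K1.card : ℝ) + ((famSetR2U F1 F3).card : ℝ) := by
    exact_mod_cast hc3.symm
  rw [ha1, ha3]
  have h1 : (0:ℝ) ≤ ((famSetR1U F1 F3).card : ℝ) := Nat.cast_nonneg _
  have h2 : (0:ℝ) ≤ ((famSetR2U F1 F3).card : ℝ) := Nat.cast_nonneg _
  have hk : (1:ℝ) ≤ (K1.card : ℝ) := by exact_mod_cast hKpos
  nlinarith

end MainAux

/-- **Theorem (parts (i) and (ii)).**  On the rooted phylogenies over a taxon set of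
size `n ≥ 3` and on the unrooted phylogenies over a taxon set of size `m ≥ 4`:
(i) for `p = 0`, `d⁽ᵖ⁾` is not a distance measure — there are distinct trees at
distance `0`; (ii) for every `p ∈ (0, 1/2)`, `d⁽ᵖ⁾` is a distance measure
(nonnegative, symmetric, and vanishing exactly on equal pairs) but not a metric —
the triangle inequality fails for some triple of trees. -/
theorem pdist_not_metric_small_p (n m : ℕ) (hn : 3 ≤ n) (hm : 4 ≤ m) :
    -- (i) rooted
    (∃ T₁ T₂ : RTree n, T₁ ≠ T₂ ∧ RTree.pdist 0 T₁ T₂ = 0) ∧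
    -- (i) unrooted
    (∃ T₁ T₂ : UTree m, T₁ ≠ T₂ ∧ UTree.pdist 0 T₁ T₂ = 0) ∧
    -- (ii)
    ∀ p : ℝ, 0 < p → p < 1 / 2 →
      ((∀ T₁ T₂ : RTree n,
          0 ≤ RTree.pdist p T₁ T₂ ∧ RTree.pdist p T₁ T₂ = RTree.pdist p T₂ T₁ ∧
            (RTree.pdist p T₁ T₂ = 0 ↔ T₁ = T₂)) ∧
        ∃ T₁ T₂ T₃ : RTree n,
          RTree.pdist p T₁ T₂ + RTree.pdist p T₂ T₃ < RTree.pdist p T₁ T₃) ∧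
      (∀ T₁ T₂ : UTree m,
          0 ≤ UTree.pdist p T₁ T₂ ∧ UTree.pdist p T₁ T₂ = UTree.pdist p T₂ T₁ ∧
            (UTree.pdist p T₁ T₂ = 0 ↔ T₁ = T₂)) ∧
        ∃ T₁ T₂ T₃ : UTree m,
          UTree.pdist p T₁ T₂ + UTree.pdist p T₂ T₃ < UTree.pdist p T₁ T₃ := by
  obtain ⟨a, b, c, hab, hac, hbc⟩ :
      ∃ a b c : Fin n, a ≠ b ∧ a ≠ c ∧ b ≠ c := by
    refine ⟨⟨0, by omega⟩, ⟨1, by omega⟩, ⟨2, by omega⟩, ?_, ?_, ?_⟩ <;>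
      simp [Fin.ext_iff]
  obtain ⟨a', b', c', e', hab', hac', hbc', hea', heb', hec'⟩ :
      ∃ a b c e : Fin m, a ≠ b ∧ a ≠ c ∧ b ≠ c ∧ e ≠ a ∧ e ≠ b ∧ e ≠ c := by
    refine ⟨⟨0, by omega⟩, ⟨1, by omega⟩, ⟨2, by omega⟩, ⟨3, by omega⟩,
      ?_, ?_, ?_, ?_, ?_, ?_⟩ <;> simp [Fin.ext_iff]
  refine ⟨?_, ?_, ?_⟩
  · -- (i) rooted
    refine ⟨starRT n hn, pairRT n hn a b hab, ?_, ?_⟩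
    · intro h
      have hcl : starFam n = insert {a, b} (starFam n) := congrArg RTree.clusters h
      apply pair_not_mem_starFam hn hab
      rw [hcl]
      exact Finset.mem_insert_self _ _
    · show famPdist 0 (starFam n) (insert {a, b} (starFam n)) = 0
      rw [famPdist_comm, famPdist_star_right, zero_mul]
  · -- (i) unrooted
    refine ⟨starUT m hm, pairUT m hm a' b' hab', ?_, ?_⟩
    · intro h
      have hcl : starFamU m = pairFamU m a' b' := congrArg UTree.splits h
      apply pair_not_mem_starFamU hm hab'
      rw [hcl, pairFamU]
      exact Finset.mem_insert_self _ _
    · show famPdistU 0 (starFamU m) (pairFamU m a' b') = 0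
      rw [famPdistU_comm, famPdistU_star_right, zero_mul]
  · -- (ii)
    intro p hp0 hp12
    refine ⟨⟨?_, ?_⟩, ?_, ?_⟩
    · -- rooted distance measure
      intro T₁ T₂
      refine ⟨famPdist_nonneg hp0.le _ _, famPdist_comm p _ _, ?_, ?_⟩
      · intro h
        obtain ⟨hD, h1, h2⟩ := famPdist_eq_zero hp0 h
        rw [famSetD, Finset.filter_eq_empty_iff] at hD
        rw [famSetR1, Finset.filter_eq_empty_iff] at h1
        rw [famSetR2, Finset.filter_eq_empty_iff] at h2
        apply rtree_eq_of_agree hn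
        · intro X hX
          have k1 := h1 hX
          have k2 := h2 hX
          tauto
        · intro X hX hr1 hr2
          have k := hD hX
          tauto
      · rintro rfl
        exact famPdist_self p _
    · -- rooted triangle violation
      exact ⟨pairRT n hn a b hab, starRT n hn, pairRT n hn a c hac,
        famPdist_pair_lt hn hab hac hbc hp0 hp12⟩
    · -- unrooted distance measure
      intro T₁ T₂
      refine ⟨famPdistU_nonneg hp0.le _ _, famPdistU_comm p _ _, ?_, ?_⟩
      · intro h
        obtain ⟨hD, h1, h2⟩ := famPdistU_eq_zero hp0 h
        rw [famSetDU, Finset.filter_eq_empty_iff] at hD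
        rw [famSetR1U, Finset.filter_eq_empty_iff] at h1
        rw [famSetR2U, Finset.filter_eq_empty_iff] at h2
        apply utree_eq_of_agree hm
        · intro X hX
          have k1 := h1 hX
          have k2 := h2 hX
          tauto
        · intro X hX hr1 hr2
          have k := hD hX
          tauto
      · rintro rfl
        exact famPdistU_self p _
    · -- unrooted triangle violation
      exact ⟨pairUT m hm a' b' hab', starUT m hm, pairUT m hm a' c' hac',
        famPdistU_pair_lt hm hab' hac' hbc' hea' heb' hec' hp0 hp12⟩
end

section
/- For every p ∈ (0, 1/2), the parametric triplet (respectively quartet) distance d^(p) on the set of all rooted (respectively unrooted) phylogenies over a fixed taxon set is a near-metric: there exists a constant c, independent of the number of trees in the domain, such that d^(p)(x,z) ≤ c·(d^(p)(x,x1) + d^(p)(x1,x2) + … + d^(p)(x_{m−1},z)) for all m > 1 and all trees x, x1, …, x_{m−1}, z. -/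
open Finset

attribute [local instance] Classical.propDecidable

section NearMetricAux

variable {n : ℕ}

/-- Abstract "resolvedness" of a restricted family: it contains a 2-element set. -/
def res2 (s : Finset (Finset (Fin n))) : Prop := ∃ A ∈ s, A.card = 2

/-- Per-triplet (per-quartet) contribution to the parametric distance, as a function
of the two restricted families. -/
noncomputable def Dp (p : ℝ) (a b : Finset (Finset (Fin n))) : ℝ :=
  if a = b then 0 else if res2 a ∧ res2 b then 1 else p

/-- Auxiliary genuine metric dominated by `Dp`. -/
noncomputable def Dm (p : ℝ) (a b : Finset (Finset (Fin n))) : ℝ :=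
  if a = b then 0 else if res2 a ∧ res2 b then 2 * p else p

variable {p : ℝ}

lemma Dm_le_two_p (hp : 0 < p) (a b : Finset (Finset (Fin n))) : Dm p a b ≤ 2 * p := by
  unfold Dm; split_ifs <;> linarith

lemma le_Dm (hp : 0 < p) {a b : Finset (Finset (Fin n))} (hab : a ≠ b) : p ≤ Dm p a b := by
  unfold Dm; split_ifs <;> first | exact absurd ‹_› hab | linarith

lemma Dm_self (a : Finset (Finset (Fin n))) : Dm p a a = 0 := by simp [Dm]

lemma Dm_nonneg (hp : 0 < p) (a b : Finset (Finset (Fin n))) : 0 ≤ Dm p a b := by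
  unfold Dm; split_ifs <;> linarith

lemma Dm_tri (hp : 0 < p) (a b c : Finset (Finset (Fin n))) :
    Dm p a c ≤ Dm p a b + Dm p b c := by
  by_cases hab : a = b
  · subst hab; rw [Dm_self, zero_add]
  by_cases hbc : b = c
  · subst hbc; rw [Dm_self, add_zero]
  have h1 := Dm_le_two_p hp a c
  have h2 := le_Dm hp hab
  have h3 := le_Dm hp hbc
  linarith

lemma Dm_le_Dp (hp : 0 < p) (hp2 : p < 1 / 2) (a b : Finset (Finset (Fin n))) :
    Dm p a b ≤ Dp p a b := by
  unfold Dm Dp; split_ifs <;> linarith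

lemma Dp_le_Dm (hp : 0 < p) (hp2 : p < 1 / 2) (a b : Finset (Finset (Fin n))) :
    Dp p a b ≤ (1 / (2 * p)) * Dm p a b := by
  have h2p : (0:ℝ) < 2 * p := by linarith
  unfold Dm Dp
  split_ifs
  · simp
  · rw [one_div, inv_mul_cancel₀ (ne_of_gt h2p)]
  · rw [one_div, inv_mul_eq_div, le_div_iff₀ h2p]; nlinarith

lemma Dm_chain (hp : 0 < p) :
    ∀ (m : ℕ) (a : Fin (m + 1) → Finset (Finset (Fin n))),
      Dm p (a 0) (a (Fin.last m)) ≤ ∑ i : Fin m, Dm p (a i.castSucc) (a i.succ) := by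
  intro m
  induction m with
  | zero => intro a; simp [Fin.last, Dm_self, show (Fin.last 0) = 0 from rfl]
  | succ m ih =>
    intro a
    have h1 := Dm_tri hp (a 0) (a ((Fin.last m).castSucc)) (a (Fin.last (m + 1)))
    have h2 : Dm p (a 0) (a ((Fin.last m).castSucc)) ≤
        ∑ i : Fin m, Dm p (a i.castSucc.castSucc) (a i.succ.castSucc) := by
      simpa using ih (fun i => a i.castSucc)
    rw [Fin.sum_univ_castSucc]
    simp only [Fin.succ_castSucc, Fin.succ_last]
    linarith

lemma Dp_chain (hp : 0 < p) (hp2 : p < 1 / 2) (m : ℕ)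
    (a : Fin (m + 1) → Finset (Finset (Fin n))) :
    Dp p (a 0) (a (Fin.last m)) ≤ (1 / (2 * p)) * ∑ i : Fin m, Dp p (a i.castSucc) (a i.succ) := by
  have hc : (0:ℝ) ≤ 1 / (2 * p) := by positivity
  calc Dp p (a 0) (a (Fin.last m)) ≤ (1 / (2 * p)) * Dm p (a 0) (a (Fin.last m)) :=
        Dp_le_Dm hp hp2 _ _
    _ ≤ (1 / (2 * p)) * ∑ i : Fin m, Dm p (a i.castSucc) (a i.succ) :=
        mul_le_mul_of_nonneg_left (Dm_chain hp m a) hc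
    _ ≤ (1 / (2 * p)) * ∑ i : Fin m, Dp p (a i.castSucc) (a i.succ) :=
        mul_le_mul_of_nonneg_left (Finset.sum_le_sum fun i _ => Dm_le_Dp hp hp2 _ _) hc

end NearMetricAux
section RTreeAux

variable {n : ℕ}

lemma famResolved_iff_res2 (F : Finset (Finset (Fin n))) (X : Finset (Fin n)) :
    famResolved F X ↔ res2 (famRestrict F X) := by
  constructor
  · rintro ⟨C, hC, hcard⟩
    refine ⟨C ∩ X, ?_, hcard⟩
    simp only [famRestrict, Finset.mem_filter, Finset.mem_image]
    refine ⟨⟨C, hC, rfl⟩, ?_⟩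
    intro h; rw [h] at hcard; simp at hcard
  · rintro ⟨A, hA, hcard⟩
    simp only [famRestrict, Finset.mem_filter, Finset.mem_image] at hA
    obtain ⟨⟨C, hC, rfl⟩, -⟩ := hA
    exact ⟨C, hC, hcard⟩

lemma restrict_unresolved (T : RTree n) {X : Finset (Fin n)} (hX : X.card = 3)
    (h : ¬ famResolved T.clusters X) :
    famRestrict T.clusters X = insert X (X.image fun a => ({a} : Finset (Fin n))) := by
  ext A
  simp only [famRestrict, Finset.mem_filter, Finset.mem_image, Finset.mem_insert]
  constructor
  · rintro ⟨⟨C, hC, rfl⟩, hne⟩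
    have hsub : C ∩ X ⊆ X := Finset.inter_subset_right
    have hle : (C ∩ X).card ≤ 3 := hX ▸ Finset.card_le_card hsub
    have h0 : (C ∩ X).card ≠ 0 := fun h0 => hne (Finset.card_eq_zero.mp h0)
    have h2 : (C ∩ X).card ≠ 2 := fun h2 => h ⟨C, hC, h2⟩
    have hcases : (C ∩ X).card = 1 ∨ (C ∩ X).card = 3 := by omega
    rcases hcases with h1 | h3
    · obtain ⟨a, ha⟩ := Finset.card_eq_one.mp h1
      refine Or.inr ⟨a, ?_, ha.symm⟩
      have : a ∈ C ∩ X := ha ▸ Finset.mem_singleton_self a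
      exact (Finset.mem_inter.mp this).2
    · exact Or.inl (Finset.eq_of_subset_of_card_le hsub (by omega))
  · rintro (rfl | ⟨a, haX, rfl⟩)
    · refine ⟨⟨Finset.univ, T.univ_mem, Finset.univ_inter A⟩, ?_⟩
      intro hXe; rw [hXe] at hX; simp at hX
    · refine ⟨⟨{a}, T.singleton_mem a, ?_⟩, by simp⟩
      exact Finset.inter_eq_left.mpr (Finset.singleton_subset_iff.mpr haX)

lemma card_filter_real {α : Type*} (s : Finset α) (q : α → Prop) [DecidablePred q] :
    ((s.filter q).card : ℝ) = ∑ x ∈ s, if q x then (1:ℝ) else 0 := by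
  rw [Finset.card_filter]
  push_cast
  rfl

lemma RTree.pdist_eq (p : ℝ) (T₁ T₂ : RTree n) :
    RTree.pdist p T₁ T₂ =
      ∑ X ∈ triplets n, Dp p (famRestrict T₁.clusters X) (famRestrict T₂.clusters X) := by
  unfold RTree.pdist famPdist famSetD famSetR1 famSetR2
  rw [card_filter_real, card_filter_real, card_filter_real, ← Finset.sum_add_distrib,
    Finset.mul_sum, ← Finset.sum_add_distrib]
  refine Finset.sum_congr rfl fun X hX => ?_
  have hX3 : X.card = 3 := by
    simpa [triplets, Finset.mem_powersetCard] using hX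
  by_cases h1 : famResolved T₁.clusters X <;> by_cases h2 : famResolved T₂.clusters X
  · by_cases he : famRestrict T₁.clusters X = famRestrict T₂.clusters X
    · simp [Dp, he, h1, h2]
    · have hr1 := (famResolved_iff_res2 _ _).mp h1
      have hr2 := (famResolved_iff_res2 _ _).mp h2
      simp [Dp, he, h1, h2, hr1, hr2]
  · have hr2 : ¬ res2 (famRestrict T₂.clusters X) :=
      fun hr => h2 ((famResolved_iff_res2 _ _).mpr hr)
    have hne : famRestrict T₁.clusters X ≠ famRestrict T₂.clusters X :=
      fun e => hr2 (e ▸ (famResolved_iff_res2 _ _).mp h1)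
    simp [Dp, hne, h1, h2, hr2]
  · have hr1 : ¬ res2 (famRestrict T₁.clusters X) :=
      fun hr => h1 ((famResolved_iff_res2 _ _).mpr hr)
    have hne : famRestrict T₁.clusters X ≠ famRestrict T₂.clusters X :=
      fun e => hr1 (e.symm ▸ (famResolved_iff_res2 _ _).mp h2)
    simp [Dp, hne, h1, h2, hr1]
  · have he : famRestrict T₁.clusters X = famRestrict T₂.clusters X := by
      rw [restrict_unresolved T₁ hX3 h1, restrict_unresolved T₂ hX3 h2]
    simp [Dp, he, h1, h2]

end RTreeAux
section UTreeAux

variable {n : ℕ}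

lemma famResolvedU_iff_res2 {F : Finset (Finset (Fin n))} {X : Finset (Fin n)}
    (hX : X.card = 4) : famResolvedU F X ↔ res2 (famRestrictU F X) := by
  constructor
  · rintro ⟨C, hC, hcard⟩
    refine ⟨C ∩ X, ?_, hcard⟩
    simp only [famRestrictU, Finset.mem_filter, Finset.mem_image]
    refine ⟨⟨C, hC, rfl⟩, ?_, ?_⟩
    · intro h; rw [h] at hcard; simp at hcard
    · intro h; rw [h, hX] at hcard; omega
  · rintro ⟨A, hA, hcard⟩
    simp only [famRestrictU, Finset.mem_filter, Finset.mem_image] at hA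
    obtain ⟨⟨C, hC, rfl⟩, -⟩ := hA
    exact ⟨C, hC, hcard⟩

lemma restrictU_unresolved (T : UTree n) {X : Finset (Fin n)} (hX : X.card = 4)
    (h : ¬ famResolvedU T.splits X) :
    famRestrictU T.splits X =
      (X.image fun a => ({a} : Finset (Fin n))) ∪ X.image (fun a => X \ {a}) := by
  have hn : 4 ≤ n := by
    have := Finset.card_le_univ X
    simpa [hX] using this
  ext A
  simp only [famRestrictU, Finset.mem_filter, Finset.mem_image, Finset.mem_union]
  constructor
  · rintro ⟨⟨C, hC, rfl⟩, hne, hneX⟩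
    have hsub : C ∩ X ⊆ X := Finset.inter_subset_right
    have hle : (C ∩ X).card ≤ 4 := hX ▸ Finset.card_le_card hsub
    have h0 : (C ∩ X).card ≠ 0 := fun h0 => hne (Finset.card_eq_zero.mp h0)
    have h2 : (C ∩ X).card ≠ 2 := fun h2 => h ⟨C, hC, h2⟩
    have h4 : (C ∩ X).card ≠ 4 :=
      fun h4 => hneX (Finset.eq_of_subset_of_card_le hsub (by omega))
    have hcases : (C ∩ X).card = 1 ∨ (C ∩ X).card = 3 := by omega
    rcases hcases with h1 | h3
    · obtain ⟨a, ha⟩ := Finset.card_eq_one.mp h1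
      refine Or.inl ⟨a, ?_, ha.symm⟩
      have : a ∈ C ∩ X := ha ▸ Finset.mem_singleton_self a
      exact (Finset.mem_inter.mp this).2
    · have hcard : (X \ (C ∩ X)).card = 1 := by
        rw [Finset.card_sdiff_of_subset hsub]; omega
      obtain ⟨a, ha⟩ := Finset.card_eq_one.mp hcard
      have haX : a ∈ X := by
        have : a ∈ X \ (C ∩ X) := ha ▸ Finset.mem_singleton_self a
        exact (Finset.mem_sdiff.mp this).1
      refine Or.inr ⟨a, haX, ?_⟩
      rw [← ha, Finset.sdiff_sdiff_eq_self hsub]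
  · have hsing : ∀ a ∈ X, ({a} : Finset (Fin n)) ∈ T.splits := by
      intro a _
      rcases T.trivial_mem a with hu | hs
      · exfalso
        have h1 : ({a} : Finset (Fin n)).card = 1 := Finset.card_singleton a
        rw [hu, Finset.card_univ, Fintype.card_fin] at h1
        omega
      · exact hs
    rintro (⟨a, haX, rfl⟩ | ⟨a, haX, rfl⟩)
    · refine ⟨⟨{a}, hsing a haX, ?_⟩, by simp, ?_⟩
      · exact Finset.inter_eq_left.mpr (Finset.singleton_subset_iff.mpr haX)
      · intro hXe; rw [← hXe] at hX; simp at hX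
    · have hcard : (X \ {a}).card = 3 := by
        rw [Finset.card_sdiff_of_subset (Finset.singleton_subset_iff.mpr haX), Finset.card_singleton, hX]
      refine ⟨⟨Finset.univ \ {a}, T.compl_mem _ (hsing a haX), ?_⟩, ?_, ?_⟩
      · ext b; simp [Finset.mem_sdiff, Finset.mem_inter]; tauto
      · intro he; rw [he] at hcard; simp at hcard
      · intro he; rw [he, hX] at hcard; omega

lemma UTree.pdist_eq (p : ℝ) (T₁ T₂ : UTree n) :
    UTree.pdist p T₁ T₂ =
      ∑ X ∈ quartets n, Dp p (famRestrictU T₁.splits X) (famRestrictU T₂.splits X) := by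
  unfold UTree.pdist famPdistU famSetDU famSetR1U famSetR2U
  rw [card_filter_real, card_filter_real, card_filter_real, ← Finset.sum_add_distrib,
    Finset.mul_sum, ← Finset.sum_add_distrib]
  refine Finset.sum_congr rfl fun X hX => ?_
  have hX4 : X.card = 4 := by
    simpa [quartets, Finset.mem_powersetCard] using hX
  by_cases h1 : famResolvedU T₁.splits X <;> by_cases h2 : famResolvedU T₂.splits X
  · by_cases he : famRestrictU T₁.splits X = famRestrictU T₂.splits X
    · simp [Dp, he, h1, h2]
    · have hr1 := (famResolvedU_iff_res2 hX4).mp h1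
      have hr2 := (famResolvedU_iff_res2 hX4).mp h2
      simp [Dp, he, h1, h2, hr1, hr2]
  · have hr2 : ¬ res2 (famRestrictU T₂.splits X) :=
      fun hr => h2 ((famResolvedU_iff_res2 hX4).mpr hr)
    have hne : famRestrictU T₁.splits X ≠ famRestrictU T₂.splits X :=
      fun e => hr2 (e ▸ (famResolvedU_iff_res2 hX4).mp h1)
    simp [Dp, hne, h1, h2, hr2]
  · have hr1 : ¬ res2 (famRestrictU T₁.splits X) :=
      fun hr => h1 ((famResolvedU_iff_res2 hX4).mpr hr)
    have hne : famRestrictU T₁.splits X ≠ famRestrictU T₂.splits X :=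
      fun e => hr1 (e.symm ▸ (famResolvedU_iff_res2 hX4).mp h2)
    simp [Dp, hne, h1, h2, hr1]
  · have he : famRestrictU T₁.splits X = famRestrictU T₂.splits X := by
      rw [restrictU_unresolved T₁ hX4 h1, restrictU_unresolved T₂ hX4 h2]
    simp [Dp, he, h1, h2]

end UTreeAux

/-- **Theorem (part (iv)).**  For every `p ∈ (0, 1/2)`, the parametric triplet
(resp. quartet) distance `d⁽ᵖ⁾` is a near-metric: there is a constant `c > 0`,
independent of the size of the domain (in particular independent of the number `n`
of taxa), such that for every chain `x = x₀, x₁, …, x_m = z` of trees with `m ≥ 2`,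
`d⁽ᵖ⁾(x, z) ≤ c · (d⁽ᵖ⁾(x, x₁) + d⁽ᵖ⁾(x₁, x₂) + ⋯ + d⁽ᵖ⁾(x_{m-1}, z))`. -/
theorem pdist_near_metric (p : ℝ) (hp0 : 0 < p) (hp2 : p < 1 / 2) :
    ∃ c : ℝ, 0 < c ∧
      (∀ (n m : ℕ), 2 ≤ m → ∀ x : Fin (m + 1) → RTree n,
        RTree.pdist p (x 0) (x (Fin.last m)) ≤
          c * ∑ i : Fin m, RTree.pdist p (x i.castSucc) (x i.succ)) ∧
      ∀ (n m : ℕ), 2 ≤ m → ∀ x : Fin (m + 1) → UTree n,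
        UTree.pdist p (x 0) (x (Fin.last m)) ≤
          c * ∑ i : Fin m, UTree.pdist p (x i.castSucc) (x i.succ) := by
  refine ⟨1 / (2 * p), by positivity, ?_, ?_⟩
  · intro n m _ x
    calc RTree.pdist p (x 0) (x (Fin.last m))
        = ∑ X ∈ triplets n, Dp p (famRestrict (x 0).clusters X)
            (famRestrict (x (Fin.last m)).clusters X) := RTree.pdist_eq p _ _
      _ ≤ ∑ X ∈ triplets n, (1 / (2 * p)) *
            ∑ i : Fin m, Dp p (famRestrict (x i.castSucc).clusters X)
              (famRestrict (x i.succ).clusters X) :=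
          Finset.sum_le_sum fun X _ =>
            Dp_chain hp0 hp2 m fun i => famRestrict (x i).clusters X
      _ = (1 / (2 * p)) * ∑ i : Fin m, RTree.pdist p (x i.castSucc) (x i.succ) := by
          rw [← Finset.mul_sum, Finset.sum_comm]
          congr 1
          exact Finset.sum_congr rfl fun i _ => (RTree.pdist_eq p _ _).symm
  · intro n m _ x
    calc UTree.pdist p (x 0) (x (Fin.last m))
        = ∑ X ∈ quartets n, Dp p (famRestrictU (x 0).splits X)
            (famRestrictU (x (Fin.last m)).splits X) := UTree.pdist_eq p _ _
      _ ≤ ∑ X ∈ quartets n, (1 / (2 * p)) *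
            ∑ i : Fin m, Dp p (famRestrictU (x i.castSucc).splits X)
              (famRestrictU (x i.succ).splits X) :=
          Finset.sum_le_sum fun X _ =>
            Dp_chain hp0 hp2 m fun i => famRestrictU (x i).splits X
      _ = (1 / (2 * p)) * ∑ i : Fin m, UTree.pdist p (x i.castSucc) (x i.succ) := by
          rw [← Finset.mul_sum, Finset.sum_comm]
          congr 1
          exact Finset.sum_congr rfl fun i _ => (UTree.pdist_eq p _ _).symm
end
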